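/- arXiv:1808.01701 — 6 statements merged into one kernel-verified Lean document; each statement's English description precedes it below -/
import Mathlib

section
/- Let 𝒳, 𝒴, 𝒵 be finite-dimensional complex Hilbert spaces, let 𝒱 ⊆ 𝒳⊗𝒴⊗𝒵 be a subspace, and let U be a unitary operator on 𝒳⊗𝒴⊗𝒵 that is 𝒴→𝒳 causal on 𝒱. Then for every Hermitian operator H on 𝒳⊗𝒴⊗𝒵 satisfying im(H) ⊆ 𝒱 and Tr_𝒵(H) = 0, and every linear operator X on 𝒳, one has ⟨H, U*(X⊗1_{𝒴⊗𝒵})U⟩ = 0. -/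
open Matrix
open scoped Kronecker ComplexOrder

/-- The partial trace over the factor `𝒵` of an operator on `𝒳 ⊗ 𝒴 ⊗ 𝒵`,
represented as a matrix over the index set `(ιX × ιY) × ιZ`. -/
noncomputable def ptraceZ3 {ιX ιY ιZ : Type*} [Fintype ιZ]
    (M : Matrix ((ιX × ιY) × ιZ) ((ιX × ιY) × ιZ) ℂ) :
    Matrix (ιX × ιY) (ιX × ιY) ℂ :=
  Matrix.of fun w w' => ∑ z, M (w, z) (w', z)

/-- The partial trace over the factor `𝒴 ⊗ 𝒵` of an operator on `𝒳 ⊗ 𝒴 ⊗ 𝒵`. -/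
noncomputable def ptraceYZ3 {ιX ιY ιZ : Type*} [Fintype ιY] [Fintype ιZ]
    (M : Matrix ((ιX × ιY) × ιZ) ((ιX × ιY) × ιZ) ℂ) :
    Matrix ιX ιX ℂ :=
  Matrix.of fun x x' => ∑ y, ∑ z, M ((x, y), z) ((x', y), z)

/-- `U` is `𝒴 → 𝒳` causal on the subspace `V ⊆ 𝒳 ⊗ 𝒴 ⊗ 𝒵`: for all density operators
`ρ, σ` supported on `V` with equal partial traces over `𝒵`, the states
`U ρ U*` and `U σ U*` have equal partial traces over `𝒴 ⊗ 𝒵`. -/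
def IsCausalOn {ιX ιY ιZ : Type*} [Fintype ιX] [Fintype ιY] [Fintype ιZ]
    (U : Matrix ((ιX × ιY) × ιZ) ((ιX × ιY) × ιZ) ℂ)
    (V : Submodule ℂ (((ιX × ιY) × ιZ) → ℂ)) : Prop :=
  ∀ ρ σ : Matrix ((ιX × ιY) × ιZ) ((ιX × ιY) × ιZ) ℂ,
    ρ.PosSemidef → ρ.trace = 1 → LinearMap.range ρ.mulVecLin ≤ V →
    σ.PosSemidef → σ.trace = 1 → LinearMap.range σ.mulVecLin ≤ V →
    ptraceZ3 ρ = ptraceZ3 σ →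
    ptraceYZ3 (U * ρ * Uᴴ) = ptraceYZ3 (U * σ * Uᴴ)

section Aux

set_option linter.unusedSectionVars false

variable {ιX ιY ιZ : Type*} [Fintype ιX] [Fintype ιY] [Fintype ιZ]

lemma ptraceZ3_sub' (A B : Matrix ((ιX × ιY) × ιZ) ((ιX × ιY) × ιZ) ℂ) :
    ptraceZ3 (A - B) = ptraceZ3 A - ptraceZ3 B := by
  ext w w'; simp [ptraceZ3, Finset.sum_sub_distrib]

lemma ptraceZ3_smul' (c : ℂ) (A : Matrix ((ιX × ιY) × ιZ) ((ιX × ιY) × ιZ) ℂ) :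
    ptraceZ3 (c • A) = c • ptraceZ3 A := by
  ext w w'; simp [ptraceZ3, Finset.mul_sum]

lemma ptraceYZ3_sub' (A B : Matrix ((ιX × ιY) × ιZ) ((ιX × ιY) × ιZ) ℂ) :
    ptraceYZ3 (A - B) = ptraceYZ3 A - ptraceYZ3 B := by
  ext x x'; simp [ptraceYZ3, Finset.sum_sub_distrib]

lemma ptraceYZ3_smul' (c : ℂ) (A : Matrix ((ιX × ιY) × ιZ) ((ιX × ιY) × ιZ) ℂ) :
    ptraceYZ3 (c • A) = c • ptraceYZ3 A := by
  ext x x'; simp [ptraceYZ3, Finset.mul_sum]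

lemma trace_ptraceZ3' (A : Matrix ((ιX × ιY) × ιZ) ((ιX × ιY) × ιZ) ℂ) :
    (ptraceZ3 A).trace = A.trace := by
  simp [ptraceZ3, Matrix.trace, Matrix.diag, Fintype.sum_prod_type]

lemma trace_mul_kron' [DecidableEq ιY] [DecidableEq ιZ]
    (M : Matrix ((ιX × ιY) × ιZ) ((ιX × ιY) × ιZ) ℂ) (X : Matrix ιX ιX ℂ) :
    (M * ((X ⊗ₖ (1 : Matrix ιY ιY ℂ)) ⊗ₖ (1 : Matrix ιZ ιZ ℂ))).trace
      = ∑ x, ∑ x', ptraceYZ3 M x x' * X x' x := by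
  simp only [Matrix.trace, Matrix.diag, Matrix.mul_apply, ptraceYZ3, Matrix.of_apply,
    Fintype.sum_prod_type, Matrix.kroneckerMap_apply, Matrix.one_apply, mul_ite, mul_one, mul_zero,
    ite_mul, zero_mul, Finset.sum_ite_eq, Finset.sum_ite_eq', Finset.mem_univ, if_true,
    Finset.sum_mul, Finset.mul_sum]
  refine Finset.sum_congr rfl fun x _ => ?_
  rw [show (∑ y : ιY, ∑ z : ιZ, ∑ x' : ιX, M ((x, y), z) ((x', y), z) * X x' x)
      = ∑ x' : ιX, ∑ y : ιY, ∑ z : ιZ, M ((x, y), z) ((x', y), z) * X x' x by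
    rw [Finset.sum_congr rfl fun y (_ : y ∈ Finset.univ) =>
      (Finset.sum_comm :
        (∑ z : ιZ, ∑ x' : ιX, M ((x, y), z) ((x', y), z) * X x' x)
          = ∑ x' : ιX, ∑ z : ιZ, M ((x, y), z) ((x', y), z) * X x' x)]
    rw [Finset.sum_comm]]

end Aux

/-- Conjugating by a matrix with `Wᴴ * W = 1` is multiplicative. -/
lemma conj_mul_conj' {m : Type*} [Fintype m] [DecidableEq m] (W A B : Matrix m m ℂ)
    (hW : Wᴴ * W = 1) : (W * A * Wᴴ) * (W * B * Wᴴ) = W * (A * B) * Wᴴ := by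
  simp only [Matrix.mul_assoc]
  rw [← Matrix.mul_assoc Wᴴ W, hW, Matrix.one_mul]

/-- A nonnegative scalar multiple of a PSD matrix is PSD. -/
lemma posSemidef_smul' {m : Type*} [Fintype m] {M : Matrix m m ℂ}
    (hM : M.PosSemidef) {c : ℂ} (hc : 0 ≤ c) : (c • M).PosSemidef := by
  have him : c.im = 0 := ((Complex.le_def.mp hc).2).symm
  constructor
  · show (c • M)ᴴ = c • M
    rw [Matrix.conjTranspose_smul, hM.1]
    congr 1
    exact Complex.conj_eq_iff_im.mpr him
  · intro x
    have hx := hM.2 x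
    have heq : (x.sum fun i xi => x.sum fun j xj => star xi * (c • M) i j * xj)
        = c * (x.sum fun i xi => x.sum fun j xj => star xi * M i j * xj) := by
      rw [Finsupp.mul_sum]
      refine Finsupp.sum_congr fun i _ => ?_
      rw [Finsupp.mul_sum]
      refine Finsupp.sum_congr fun j _ => ?_
      simp only [Matrix.smul_apply, smul_eq_mul]
      ring
    rw [heq]
    exact mul_nonneg hc hx

/-- If `U` is a unitary on `𝒳 ⊗ 𝒴 ⊗ 𝒵` that is `𝒴 → 𝒳` causal on a subspace `V`, then for
every Hermitian `H` with `im(H) ⊆ V` and `Tr_𝒵(H) = 0` and every operator `X` on `𝒳`,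
the Hilbert–Schmidt inner product `⟨H, U*(X ⊗ 1)U⟩ = Tr(H* U*(X ⊗ 1)U)` vanishes. -/
theorem statement0 {ιX ιY ιZ : Type*} [Fintype ιX] [Fintype ιY] [Fintype ιZ]
    [DecidableEq ιX] [DecidableEq ιY] [DecidableEq ιZ]
    (V : Submodule ℂ (((ιX × ιY) × ιZ) → ℂ))
    (U : Matrix ((ιX × ιY) × ιZ) ((ιX × ιY) × ιZ) ℂ)
    (hU : U ∈ Matrix.unitaryGroup ((ιX × ιY) × ιZ) ℂ)
    (hUcausal : IsCausalOn U V)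
    (H : Matrix ((ιX × ιY) × ιZ) ((ιX × ιY) × ιZ) ℂ)
    (hH : H.IsHermitian)
    (hHim : LinearMap.range H.mulVecLin ≤ V)
    (hHtr : ptraceZ3 H = 0)
    (X : Matrix ιX ιX ℂ) :
    (Hᴴ * (Uᴴ * ((X ⊗ₖ (1 : Matrix ιY ιY ℂ)) ⊗ₖ (1 : Matrix ιZ ιZ ℂ)) * U)).trace = 0 := by
  classical
  set K : Matrix ((ιX × ιY) × ιZ) ((ιX × ιY) × ιZ) ℂ :=
    (X ⊗ₖ (1 : Matrix ιY ιY ℂ)) ⊗ₖ (1 : Matrix ιZ ιZ ℂ) with hKdef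
  -- reduce to showing `ptraceYZ3 (U * H * Uᴴ) = 0`
  suffices hyz : ptraceYZ3 (U * H * Uᴴ) = 0 by
    rw [hH.eq]
    rw [show H * (Uᴴ * K * U) = (H * (Uᴴ * K)) * U by simp only [Matrix.mul_assoc],
      Matrix.trace_mul_comm]
    rw [show U * (H * (Uᴴ * K)) = (U * H * Uᴴ) * K by simp only [Matrix.mul_assoc]]
    rw [trace_mul_kron', hyz]
    simp
  -- spectral decomposition of `H` into positive and negative parts
  set W : Matrix ((ιX × ιY) × ιZ) ((ιX × ιY) × ιZ) ℂ :=
    (hH.eigenvectorUnitary : Matrix ((ιX × ιY) × ιZ) ((ιX × ιY) × ιZ) ℂ) with hWdef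
  have hWU : Wᴴ * W = 1 := by
    have := hH.eigenvectorUnitary.2.1
    simpa [Matrix.star_eq_conjTranspose] using this
  set e : ((ιX × ιY) × ιZ) → ℝ := hH.eigenvalues with hedef
  have hspec : H = W * Matrix.diagonal (fun i => (e i : ℂ)) * Wᴴ := by
    exact hH.spectral_theorem
  set d1 : ((ιX × ιY) × ιZ) → ℂ := fun i => ((max (e i) 0 : ℝ) : ℂ) with hd1def
  set d2 : ((ιX × ιY) × ιZ) → ℂ := fun i => ((max (-(e i)) 0 : ℝ) : ℂ) with hd2def
  set P := W * Matrix.diagonal d1 * Wᴴ with hPdef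
  set N := W * Matrix.diagonal d2 * Wᴴ with hNdef
  have hHPN : P - N = H := by
    rw [hPdef, hNdef, ← Matrix.sub_mul, ← Matrix.mul_sub, Matrix.diagonal_sub]
    rw [show (fun i => d1 i - d2 i) = fun i => (e i : ℂ) by
      funext i
      simp only [hd1def, hd2def, ← Complex.ofReal_sub,
        max_zero_sub_max_neg_zero_eq_self]]
    exact hspec.symm
  have hP : P.PosSemidef :=
    (Matrix.posSemidef_diagonal_iff.mpr fun i =>
      Complex.zero_le_real.mpr (le_max_right _ _)).mul_mul_conjTranspose_same W
  have hN : N.PosSemidef :=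
    (Matrix.posSemidef_diagonal_iff.mpr fun i =>
      Complex.zero_le_real.mpr (le_max_right _ _)).mul_mul_conjTranspose_same W
  -- ranges of P and N lie in V
  have hrange : ∀ (f : ℝ → ℝ), f 0 = 0 →
      LinearMap.range (W * Matrix.diagonal (fun i => ((f (e i) : ℝ) : ℂ)) * Wᴴ).mulVecLin ≤ V := by
    intro f hf
    set q : ((ιX × ιY) × ιZ) → ℂ := fun i =>
      (if e i = 0 then 0 else ((f (e i) / e i : ℝ) : ℂ)) with hqdef
    have hfun : (fun i => (e i : ℂ) * q i) = fun i => ((f (e i) : ℝ) : ℂ) := by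
      funext i
      by_cases h : e i = 0
      · simp [hqdef, h, hf]
      · simp only [hqdef, h, if_false]
        rw [← Complex.ofReal_mul]
        congr 1
        field_simp
    have hHQ : H * (W * Matrix.diagonal q * Wᴴ)
        = W * Matrix.diagonal (fun i => ((f (e i) : ℝ) : ℂ)) * Wᴴ := by
      rw [hspec, conj_mul_conj' W _ _ hWU, Matrix.diagonal_mul_diagonal, hfun]
    refine le_trans ?_ hHim
    rw [← hHQ, Matrix.mulVecLin_mul]
    exact LinearMap.range_comp_le_range _ _
  have hPim : LinearMap.range P.mulVecLin ≤ V := by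
    have := hrange (fun r => max r 0) (by simp)
    simpa [hPdef, hd1def] using this
  have hNim : LinearMap.range N.mulVecLin ≤ V := by
    have := hrange (fun r => max (-r) 0) (by simp)
    simpa [hNdef, hd2def] using this
  -- equal partial traces over Z
  have hZPN : ptraceZ3 P = ptraceZ3 N := by
    have h0 : ptraceZ3 P - ptraceZ3 N = 0 := by
      rw [← ptraceZ3_sub', hHPN, hHtr]
    exact sub_eq_zero.mp h0
  -- traces
  have htrconj : ∀ d : ((ιX × ιY) × ιZ) → ℂ,
      (W * Matrix.diagonal d * Wᴴ).trace = ∑ i, d i := by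
    intro d
    rw [Matrix.trace_mul_cycle, hWU, Matrix.one_mul, Matrix.trace_diagonal]
  set t : ℝ := ∑ i, max (e i) 0 with htdef
  have htP : P.trace = (t : ℂ) := by
    rw [hPdef, htrconj, hd1def]; push_cast [htdef]; rfl
  have htN : N.trace = (t : ℂ) := by
    rw [← trace_ptraceZ3' N, ← hZPN, trace_ptraceZ3' P, htP]
  have ht0 : 0 ≤ t := Finset.sum_nonneg fun i _ => le_max_right _ _
  by_cases hc : t = 0
  · -- H = 0
    have h1 : ∀ i, max (e i) 0 = 0 := by
      intro i
      exact (Finset.sum_eq_zero_iff_of_nonneg fun j _ => le_max_right _ _).mp hc i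
        (Finset.mem_univ i)
    have h2 : ∀ i, max (-(e i)) 0 = 0 := by
      have hd2sum : (∑ i, d2 i) = 0 := by
        rw [← htrconj d2, ← hNdef, htN, hc]
        simp
      have hsum : (∑ i, max (-(e i)) 0 : ℝ) = 0 := by
        have hC : ((∑ i, max (-(e i)) 0 : ℝ) : ℂ) = 0 := by
          rw [← hd2sum]
          push_cast [hd2def]
          rfl
        exact_mod_cast hC
      exact fun i => (Finset.sum_eq_zero_iff_of_nonneg fun j _ => le_max_right _ _).mp hsum i
        (Finset.mem_univ i)
    have he0 : ∀ i, e i = 0 := by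
      intro i
      have hle : e i ≤ 0 := (le_max_left (e i) 0).trans_eq (h1 i)
      have hge : 0 ≤ e i := neg_nonpos.mp ((le_max_left (-(e i)) 0).trans_eq (h2 i))
      linarith
    have hH0 : H = 0 := by
      rw [hspec, show (fun i => ((e i : ℝ) : ℂ)) = fun _ => (0 : ℂ) by
        funext i; rw [he0 i]; simp]
      simp
    rw [hH0, Matrix.mul_zero, Matrix.zero_mul]
    ext x x'
    simp [ptraceYZ3]
  · -- t > 0: apply causality to the normalized positive/negative parts
    have hct : ((t : ℂ)) ≠ 0 := by exact_mod_cast hc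
    set c : ℂ := (t : ℂ)⁻¹ with hcdef
    have hcnn : 0 ≤ c := by
      rw [hcdef, ← Complex.ofReal_inv]
      exact Complex.zero_le_real.mpr (inv_nonneg.mpr ht0)
    have hcne : c ≠ 0 := inv_ne_zero hct
    have hsmul_range : ∀ (M : Matrix ((ιX × ιY) × ιZ) ((ιX × ιY) × ιZ) ℂ),
        LinearMap.range M.mulVecLin ≤ V → LinearMap.range (c • M).mulVecLin ≤ V := by
      intro M hM
      rintro v ⟨u, rfl⟩
      refine hM ⟨c • u, ?_⟩
      simp [Matrix.mulVecLin_apply, Matrix.smul_mulVec, Matrix.mulVec_smul]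
    have key := hUcausal (c • P) (c • N)
      (posSemidef_smul' hP hcnn)
      (by rw [Matrix.trace_smul, htP, smul_eq_mul, hcdef, inv_mul_cancel₀ hct])
      (hsmul_range P hPim)
      (posSemidef_smul' hN hcnn)
      (by rw [Matrix.trace_smul, htN, smul_eq_mul, hcdef, inv_mul_cancel₀ hct])
      (hsmul_range N hNim)
      (by rw [ptraceZ3_smul', ptraceZ3_smul', hZPN])
    rw [Matrix.mul_smul, Matrix.smul_mul, Matrix.mul_smul, Matrix.smul_mul,
      ptraceYZ3_smul', ptraceYZ3_smul'] at key
    have key2 : ptraceYZ3 (U * P * Uᴴ) = ptraceYZ3 (U * N * Uᴴ) :=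
      smul_right_injective _ hcne key
    rw [← hHPN, Matrix.mul_sub, Matrix.sub_mul, ptraceYZ3_sub', key2, sub_self]
end

section
/- Let 𝒲 and 𝒵 be finite-dimensional complex Hilbert spaces, let {Δ_1,…,Δ_n} be an orthogonal set of nonzero projection operators on 𝒲, let {Λ_1,…,Λ_n} be an orthogonal set of nonzero projection operators on 𝒵, and let Π = Σ_{k=1}^n Δ_k⊗Λ_k. Let A be a linear operator on 𝒲⊗𝒵 such that ⟨H, A⟩ = 0 for every Hermitian operator H on 𝒲⊗𝒵 with im(H) ⊆ im(Π) and Tr_𝒵(H) = 0. Then there exists a linear operator W on 𝒲 such that ΠAΠ = Π(W⊗1_𝒵)Π. -/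
open Matrix
open scoped Kronecker ComplexOrder InnerProductSpace

/-- The partial trace over the factor `𝒵` of an operator on `𝒲 ⊗ 𝒵`. -/
noncomputable def ptraceZ2 {ιW ιZ : Type*} [Fintype ιZ]
    (M : Matrix (ιW × ιZ) (ιW × ιZ) ℂ) : Matrix ιW ιW ℂ :=
  Matrix.of fun w w' => ∑ z, M (w, z) (w', z)

noncomputable def matE (I : Type*) [Fintype I] : Matrix I I ℂ ≃ₗ[ℂ] EuclideanSpace ℂ (I × I) where
  toFun X := WithLp.toLp 2 fun p : I × I => X p.1 p.2
  map_add' _ _ := rfl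
  map_smul' _ _ := rfl
  invFun f := Matrix.of fun i j => f (i, j)
  left_inv _ := rfl
  right_inv _ := rfl

lemma inner_matE {I : Type*} [Fintype I] (X Y : Matrix I I ℂ) :
    ⟪matE I X, matE I Y⟫_ℂ = (Xᴴ * Y).trace := by
  simp only [PiLp.inner_apply, RCLike.inner_apply, Matrix.trace, Matrix.diag,
    Matrix.mul_apply, Matrix.conjTranspose_apply, matE, LinearEquiv.coe_mk]
  rw [Fintype.sum_prod_type, Finset.sum_comm]
  exact Finset.sum_congr rfl fun _ _ => Finset.sum_congr rfl fun _ _ => mul_comm _ _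

lemma kron_conjT {m n : Type*} (A : Matrix m m ℂ) (B : Matrix n n ℂ) :
    (A ⊗ₖ B)ᴴ = Aᴴ ⊗ₖ Bᴴ := by
  ext p q
  simp [Matrix.conjTranspose_apply, star_mul']

lemma ptraceZ2_add {ιW ιZ : Type*} [Fintype ιZ] (M N : Matrix (ιW × ιZ) (ιW × ιZ) ℂ) :
    ptraceZ2 (M + N) = ptraceZ2 M + ptraceZ2 N := by
  ext w w'; simp [ptraceZ2, Finset.sum_add_distrib]

lemma ptraceZ2_smul {ιW ιZ : Type*} [Fintype ιZ] (c : ℂ) (M : Matrix (ιW × ιZ) (ιW × ιZ) ℂ) :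
    ptraceZ2 (c • M) = c • ptraceZ2 M := by
  ext w w'; simp [ptraceZ2, Finset.mul_sum]

lemma ptraceZ2_conjT {ιW ιZ : Type*} [Fintype ιZ] (M : Matrix (ιW × ιZ) (ιW × ιZ) ℂ) :
    ptraceZ2 Mᴴ = (ptraceZ2 M)ᴴ := by
  ext w w'
  simp [ptraceZ2, Matrix.conjTranspose_apply]

lemma trace_kron_one_mul {ιW ιZ : Type*} [Fintype ιW] [Fintype ιZ] [DecidableEq ιZ]
    (V : Matrix ιW ιW ℂ) (H : Matrix (ιW × ιZ) (ιW × ιZ) ℂ) :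
    ((V ⊗ₖ (1 : Matrix ιZ ιZ ℂ)) * H).trace = (V * ptraceZ2 H).trace := by
  simp only [Matrix.trace, Matrix.diag, Matrix.mul_apply, ptraceZ2, Matrix.of_apply,
    kroneckerMap_apply, Matrix.one_apply, Fintype.sum_prod_type, Finset.mul_sum,
    ite_mul, one_mul, zero_mul, mul_ite, mul_one, mul_zero, Finset.sum_ite_eq,
    Finset.mem_univ, if_true]
  exact Finset.sum_congr rfl fun w _ => Finset.sum_comm

lemma eq_zero_of_forall_trace {ι : Type*} [Fintype ι] [DecidableEq ι] (M : Matrix ι ι ℂ)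
    (h : ∀ V : Matrix ι ι ℂ, (V * M).trace = 0) : M = 0 := by
  ext i j
  have := h (Matrix.single j i 1)
  simpa [Matrix.trace, Matrix.diag, Matrix.mul_apply, Matrix.single,
    ite_mul, one_mul, zero_mul, ite_and, Finset.sum_ite_eq, Finset.mem_univ] using this

/-- Given orthogonal families of nonzero (Hermitian, idempotent) projections
`Δ_k` on `𝒲` and `Λ_k` on `𝒵`, set `Π = Σ_k Δ_k ⊗ Λ_k`.  If `A` is an operator on `𝒲 ⊗ 𝒵`
such that `⟨H, A⟩ = 0` for every Hermitian `H` with `im(H) ⊆ im(Π)` and `Tr_𝒵(H) = 0`,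
then `Π A Π = Π (W ⊗ 1) Π` for some operator `W` on `𝒲`. -/
theorem statement1 {ιW ιZ : Type*} [Fintype ιW] [Fintype ιZ] [DecidableEq ιW] [DecidableEq ιZ]
    (n : ℕ) (Δ : Fin n → Matrix ιW ιW ℂ) (Λ : Fin n → Matrix ιZ ιZ ℂ)
    (hΔproj : ∀ k, (Δ k).IsHermitian ∧ Δ k * Δ k = Δ k)
    (hΔne : ∀ k, Δ k ≠ 0)
    (hΔorth : ∀ j k, j ≠ k → Δ j * Δ k = 0)
    (hΛproj : ∀ k, (Λ k).IsHermitian ∧ Λ k * Λ k = Λ k)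
    (hΛne : ∀ k, Λ k ≠ 0)
    (hΛorth : ∀ j k, j ≠ k → Λ j * Λ k = 0)
    (A : Matrix (ιW × ιZ) (ιW × ιZ) ℂ)
    (hA : ∀ H : Matrix (ιW × ιZ) (ιW × ιZ) ℂ, H.IsHermitian →
      LinearMap.range H.mulVecLin ≤ LinearMap.range (∑ k, Δ k ⊗ₖ Λ k).mulVecLin →
      ptraceZ2 H = 0 → (Hᴴ * A).trace = 0) :
    ∃ W : Matrix ιW ιW ℂ,
      (∑ k, Δ k ⊗ₖ Λ k) * A * (∑ k, Δ k ⊗ₖ Λ k) =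
      (∑ k, Δ k ⊗ₖ Λ k) * (W ⊗ₖ (1 : Matrix ιZ ιZ ℂ)) * (∑ k, Δ k ⊗ₖ Λ k) := by
  classical
  set P : Matrix (ιW × ιZ) (ιW × ιZ) ℂ := ∑ k, Δ k ⊗ₖ Λ k with hPdef
  have hPH : Pᴴ = P := by
    rw [hPdef, Matrix.conjTranspose_sum]
    exact Finset.sum_congr rfl fun k _ => by rw [kron_conjT, (hΔproj k).1, (hΛproj k).1]
  have hPP : P * P = P := by
    rw [hPdef, Finset.sum_mul_sum]
    refine Finset.sum_congr rfl fun j _ => ?_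
    rw [Finset.sum_eq_single j]
    · rw [← Matrix.mul_kronecker_mul, (hΔproj j).2, (hΛproj j).2]
    · intro k _ hk
      rw [← Matrix.mul_kronecker_mul, hΔorth j k (Ne.symm hk), Matrix.zero_kronecker]
    · intro h; exact absurd (Finset.mem_univ j) h
  have hrange : ∀ Y : Matrix (ιW × ιZ) (ιW × ιZ) ℂ,
      LinearMap.range (P * Y).mulVecLin ≤ LinearMap.range P.mulVecLin := by
    intro Y
    rw [Matrix.mulVecLin_mul]
    exact LinearMap.range_comp_le_range _ _
  let Φ : Matrix ιW ιW ℂ →ₗ[ℂ] Matrix (ιW × ιZ) (ιW × ιZ) ℂ :=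
    { toFun := fun W => P * (W ⊗ₖ (1 : Matrix ιZ ιZ ℂ)) * P
      map_add' := fun x y => by
        simp [Matrix.add_kronecker, Matrix.mul_add, Matrix.add_mul]
      map_smul' := fun c x => by
        simp [Matrix.smul_kronecker, Matrix.mul_smul, Matrix.smul_mul] }
  let e := matE (ιW × ιZ)
  let U : Submodule ℂ (EuclideanSpace ℂ ((ιW × ιZ) × (ιW × ιZ))) :=
    (LinearMap.range Φ).map (e : Matrix (ιW × ιZ) (ιW × ιZ) ℂ →ₗ[ℂ] _)
  have key : e (P * A * P) ∈ U := by
    rw [← Submodule.orthogonal_orthogonal U, Submodule.mem_orthogonal]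
    intro x hx
    set X : Matrix (ιW × ιZ) (ιW × ιZ) ℂ := e.symm x with hXdef
    have hxe : x = e X := (e.apply_symm_apply x).symm
    set H : Matrix (ιW × ιZ) (ιW × ιZ) ℂ := P * X * P with hHdef
    have hHc : Hᴴ = P * Xᴴ * P := by
      rw [hHdef, Matrix.conjTranspose_mul, Matrix.conjTranspose_mul, hPH, Matrix.mul_assoc]
    -- From x ⊥ U: for all W, ((Wᴴ ⊗ₖ 1) * H).trace = 0
    have horth : ∀ W : Matrix ιW ιW ℂ, ((Wᴴ ⊗ₖ (1 : Matrix ιZ ιZ ℂ)) * H).trace = 0 := by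
      intro W
      have hmem : e (Φ W) ∈ U := Submodule.mem_map_of_mem (LinearMap.mem_range_self Φ W)
      have h0 : ⟪e (Φ W), x⟫_ℂ = 0 := (Submodule.mem_orthogonal U x).mp hx _ hmem
      rw [hxe, inner_matE] at h0
      have hc : (Φ W)ᴴ = P * (Wᴴ ⊗ₖ (1 : Matrix ιZ ιZ ℂ)) * P := by
        show (P * (W ⊗ₖ (1 : Matrix ιZ ιZ ℂ)) * P)ᴴ = _
        rw [Matrix.conjTranspose_mul, Matrix.conjTranspose_mul, hPH, kron_conjT,
          Matrix.conjTranspose_one, Matrix.mul_assoc]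
      rw [hc] at h0
      calc ((Wᴴ ⊗ₖ (1 : Matrix ιZ ιZ ℂ)) * H).trace
          = (((Wᴴ ⊗ₖ (1 : Matrix ιZ ιZ ℂ)) * (P * X)) * P).trace := by
            rw [hHdef]; congr 1; noncomm_ring
        _ = (P * ((Wᴴ ⊗ₖ (1 : Matrix ιZ ιZ ℂ)) * (P * X))).trace :=
            (Matrix.trace_mul_comm _ _).symm
        _ = (P * (Wᴴ ⊗ₖ (1 : Matrix ιZ ιZ ℂ)) * P * X).trace := by congr 1; noncomm_ring
        _ = 0 := h0
    have hptr : ptraceZ2 H = 0 := by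
      apply eq_zero_of_forall_trace
      intro V
      rw [← trace_kron_one_mul]
      have := horth Vᴴ
      rwa [Matrix.conjTranspose_conjTranspose] at this
    have hptr' : ptraceZ2 Hᴴ = 0 := by rw [ptraceZ2_conjT, hptr]; simp
    -- Hermitian decomposition
    set G1 : Matrix (ιW × ιZ) (ιW × ιZ) ℂ := H + Hᴴ with hG1def
    set G2 : Matrix (ιW × ιZ) (ιW × ιZ) ℂ := Complex.I • (H - Hᴴ) with hG2def
    have hG1 : G1.IsHermitian := by
      rw [Matrix.IsHermitian, hG1def, Matrix.conjTranspose_add,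
        Matrix.conjTranspose_conjTranspose, add_comm]
    have hG2 : G2.IsHermitian := by
      rw [Matrix.IsHermitian, hG2def, Matrix.conjTranspose_smul, Matrix.conjTranspose_sub,
        Matrix.conjTranspose_conjTranspose]
      simp only [Complex.star_def, Complex.conj_I]
      module
    have hG1P : G1 = P * ((X + Xᴴ) * P) := by
      rw [hG1def, hHdef, hHc]
      noncomm_ring
    have hG2P : G2 = P * ((Complex.I • (X - Xᴴ)) * P) := by
      rw [hG2def, hHdef, hHc, Matrix.smul_mul, Matrix.mul_smul]
      congr 1
      noncomm_ring
    have hG1tr : ptraceZ2 G1 = 0 := by rw [hG1def, ptraceZ2_add, hptr, hptr']; simp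
    have hG2tr : ptraceZ2 G2 = 0 := by
      rw [hG2def, ptraceZ2_smul]
      have : ptraceZ2 (H - Hᴴ) = 0 := by
        have : H - Hᴴ = H + (-1 : ℂ) • Hᴴ := by module
        rw [this, ptraceZ2_add, ptraceZ2_smul, hptr, hptr']; simp
      rw [this, smul_zero]
    have e1 : (G1 * A).trace = 0 := by
      have := hA G1 hG1 (by rw [hG1P]; exact hrange _) hG1tr
      rwa [hG1] at this
    have e2 : (G2 * A).trace = 0 := by
      have := hA G2 hG2 (by rw [hG2P]; exact hrange _) hG2tr
      rwa [hG2] at this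
    -- conclude ⟪x, e (P*A*P)⟫ = 0
    rw [hxe, inner_matE]
    have hcyc : (Xᴴ * (P * A * P)).trace = (Hᴴ * A).trace := by
      rw [hHc]
      rw [show Xᴴ * (P * A * P) = Xᴴ * P * A * P by noncomm_ring]
      rw [Matrix.trace_mul_comm (Xᴴ * P * A) P]
      congr 1
      noncomm_ring
    rw [hcyc]
    have h2H : (2 : ℂ) • Hᴴ = G1 + Complex.I • G2 := by
      rw [hG1def, hG2def, smul_smul, Complex.I_mul_I]
      module
    have : ((2 : ℂ) • Hᴴ * A).trace = 0 := by
      rw [h2H, Matrix.add_mul, Matrix.trace_add, Matrix.smul_mul, Matrix.trace_smul, e1, e2]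
      simp
    rw [Matrix.smul_mul, Matrix.trace_smul] at this
    have h2 : (2 : ℂ) ≠ 0 := by norm_num
    exact (smul_eq_zero.mp this).resolve_left h2
  -- extract W
  obtain ⟨y, hy, hey⟩ := key
  obtain ⟨W, hW⟩ := hy
  refine ⟨W, ?_⟩
  have : y = P * A * P := e.injective hey
  rw [← this, ← hW]
  rfl
end

section
/- Let 𝒲 and 𝒵 be finite-dimensional complex Hilbert spaces, let {Δ_1,…,Δ_n} be an orthogonal set of nonzero projection operators on 𝒲, let {Λ_1,…,Λ_n} be an orthogonal set of nonzero projection operators on 𝒵, and let Π = Σ_{k=1}^n Δ_k⊗Λ_k. Let A be a unitary operator on 𝒲⊗𝒵 such that AΠ = ΠA and such that ⟨H, A⟩ = 0 for every Hermitian operator H on 𝒲⊗𝒵 with im(H) ⊆ im(Π) and Tr_𝒵(H) = 0. Then there exists a unitary operator W on 𝒲 such that ΠAΠ = Π(W⊗1_𝒵)Π. -/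
open Matrix
open scoped Kronecker ComplexOrder

namespace S2Aux

set_option linter.unusedSectionVars false

variable {ιW ιZ : Type*} [Fintype ιW] [Fintype ιZ] [DecidableEq ιW] [DecidableEq ιZ]

lemma sum_mul_sum_of_orth {R : Type*} [NonUnitalNonAssocSemiring R] {n : ℕ} (f g : Fin n → R)
    (h : ∀ j k, j ≠ k → f j * g k = 0) :
    (∑ j, f j) * (∑ k, g k) = ∑ k, f k * g k := by
  rw [Finset.sum_mul_sum]
  exact Finset.sum_congr rfl fun j _ =>
    Finset.sum_eq_single j (fun k _ hk => h j k (Ne.symm hk)) (by simp)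

lemma kron_conjTranspose {l m p q : Type*} (P : Matrix l m ℂ) (Q : Matrix p q ℂ) :
    (P ⊗ₖ Q)ᴴ = Pᴴ ⊗ₖ Qᴴ := by
  ext ⟨a, b⟩ ⟨c, d⟩
  simp [conjTranspose_apply, kroneckerMap_apply]

lemma sub_kron (P P' : Matrix ιW ιW ℂ) (Q : Matrix ιZ ιZ ℂ) :
    (P - P') ⊗ₖ Q = P ⊗ₖ Q - P' ⊗ₖ Q := by
  ext ⟨a, b⟩ ⟨c, d⟩
  simp [kroneckerMap_apply, sub_mul]

lemma ptrace_add (M N : Matrix (ιW × ιZ) (ιW × ιZ) ℂ) :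
    ptraceZ2 (M + N) = ptraceZ2 M + ptraceZ2 N := by
  ext w w'; simp [ptraceZ2, Finset.sum_add_distrib]

lemma ptrace_sub (M N : Matrix (ιW × ιZ) (ιW × ιZ) ℂ) :
    ptraceZ2 (M - N) = ptraceZ2 M - ptraceZ2 N := by
  ext w w'; simp [ptraceZ2, Finset.sum_sub_distrib]

lemma ptrace_smul (c : ℂ) (M : Matrix (ιW × ιZ) (ιW × ιZ) ℂ) :
    ptraceZ2 (c • M) = c • ptraceZ2 M := by
  ext w w'; simp [ptraceZ2, Finset.mul_sum]

lemma ptrace_zero : ptraceZ2 (0 : Matrix (ιW × ιZ) (ιW × ιZ) ℂ) = 0 := by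
  ext w w'; simp [ptraceZ2]

lemma ptrace_conjTranspose (M : Matrix (ιW × ιZ) (ιW × ιZ) ℂ) :
    ptraceZ2 Mᴴ = (ptraceZ2 M)ᴴ := by
  ext w w'; simp [ptraceZ2, conjTranspose_apply]

lemma ptrace_sum {n : ℕ} (f : Fin n → Matrix (ιW × ιZ) (ιW × ιZ) ℂ) :
    ptraceZ2 (∑ k, f k) = ∑ k, ptraceZ2 (f k) := by
  ext w w'
  simp only [ptraceZ2, Matrix.of_apply, Matrix.sum_apply]
  exact Finset.sum_comm

lemma ptrace_kron (P : Matrix ιW ιW ℂ) (Q : Matrix ιZ ιZ ℂ) :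
    ptraceZ2 (P ⊗ₖ Q) = Q.trace • P := by
  ext w w'
  simp [ptraceZ2, kroneckerMap_apply, Matrix.trace, Matrix.diag, Finset.mul_sum, mul_comm]

lemma ptrace_lmul (P : Matrix ιW ιW ℂ) (M : Matrix (ιW × ιZ) (ιW × ιZ) ℂ) :
    ptraceZ2 ((P ⊗ₖ (1 : Matrix ιZ ιZ ℂ)) * M) = P * ptraceZ2 M := by
  ext w w'
  simp only [ptraceZ2, Matrix.of_apply, Matrix.mul_apply, Matrix.kroneckerMap_apply,
    Matrix.one_apply, Fintype.sum_prod_type, mul_ite, mul_zero, ite_mul, zero_mul,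
    mul_one, one_mul, Finset.sum_ite_irrel, Finset.sum_const_zero, Finset.sum_ite_eq,
    Finset.sum_ite_eq', Finset.mem_univ, if_true, Finset.mul_sum]
  exact Finset.sum_comm

lemma ptrace_rmul (R : Matrix ιW ιW ℂ) (M : Matrix (ιW × ιZ) (ιW × ιZ) ℂ) :
    ptraceZ2 (M * (R ⊗ₖ (1 : Matrix ιZ ιZ ℂ))) = ptraceZ2 M * R := by
  ext w w'
  simp only [ptraceZ2, Matrix.of_apply, Matrix.mul_apply, Matrix.kroneckerMap_apply,
    Matrix.one_apply, Fintype.sum_prod_type, mul_ite, mul_zero, ite_mul, zero_mul,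
    mul_one, one_mul, Finset.sum_ite_irrel, Finset.sum_const_zero, Finset.sum_ite_eq,
    Finset.sum_ite_eq', Finset.mem_univ, if_true, Finset.sum_mul]
  exact Finset.sum_comm

lemma ptrace_comm (S : Matrix ιZ ιZ ℂ) (M : Matrix (ιW × ιZ) (ιW × ιZ) ℂ) :
    ptraceZ2 (M * ((1 : Matrix ιW ιW ℂ) ⊗ₖ S)) = ptraceZ2 (((1 : Matrix ιW ιW ℂ) ⊗ₖ S) * M) := by
  ext w w'
  simp only [ptraceZ2, Matrix.of_apply, Matrix.mul_apply, Matrix.kroneckerMap_apply,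
    Matrix.one_apply, Fintype.sum_prod_type, mul_ite, mul_zero, ite_mul, zero_mul,
    mul_one, one_mul, Finset.sum_ite_irrel, Finset.sum_const_zero, Finset.sum_ite_eq,
    Finset.sum_ite_eq', Finset.mem_univ, if_true]
  refine Eq.trans (Finset.sum_comm (f := fun x x2 => M (w, x) (w', x2) * S x2 x)) ?_
  exact Finset.sum_congr rfl fun d _ => Finset.sum_congr rfl fun z _ => mul_comm _ _

lemma trace_pair (Y : Matrix (ιW × ιZ) (ιW × ιZ) ℂ) (B : Matrix ιW ιW ℂ) :
    (Yᴴ * (B ⊗ₖ (1 : Matrix ιZ ιZ ℂ))).trace = ((ptraceZ2 Y)ᴴ * B).trace := by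
  simp only [Matrix.trace, Matrix.diag, Matrix.mul_apply, Matrix.conjTranspose_apply,
    ptraceZ2, Matrix.of_apply, Matrix.kroneckerMap_apply, Matrix.one_apply,
    Fintype.sum_prod_type, mul_ite, mul_zero, ite_mul, zero_mul, mul_one, one_mul,
    Finset.sum_ite_irrel, Finset.sum_const_zero, Finset.sum_ite_eq, Finset.sum_ite_eq',
    Finset.mem_univ, if_true, star_sum, Finset.sum_mul]
  refine Finset.sum_congr rfl fun x _ =>
    Finset.sum_comm (f := fun x1 x2 => star (Y (x2, x1) (x, x1)) * B x2 x)

lemma ptrace_sandwich (P R : Matrix ιW ιW ℂ) (Q S : Matrix ιZ ιZ ℂ)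
    (M : Matrix (ιW × ιZ) (ιW × ιZ) ℂ) :
    ptraceZ2 ((P ⊗ₖ Q) * M * (R ⊗ₖ S)) =
      P * ptraceZ2 (((1 : Matrix ιW ιW ℂ) ⊗ₖ (S * Q)) * M) * R := by
  have h1 : (P ⊗ₖ Q) = (P ⊗ₖ (1 : Matrix ιZ ιZ ℂ)) * ((1 : Matrix ιW ιW ℂ) ⊗ₖ Q) := by
    rw [← mul_kronecker_mul, mul_one, one_mul]
  have h2 : (R ⊗ₖ S) = ((1 : Matrix ιW ιW ℂ) ⊗ₖ S) * (R ⊗ₖ (1 : Matrix ιZ ιZ ℂ)) := by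
    rw [← mul_kronecker_mul, mul_one, one_mul]
  have h3 : (P ⊗ₖ Q) * M * (R ⊗ₖ S) =
      (P ⊗ₖ (1 : Matrix ιZ ιZ ℂ)) *
        (((1 : Matrix ιW ιW ℂ) ⊗ₖ Q) * M * ((1 : Matrix ιW ιW ℂ) ⊗ₖ S)) *
        (R ⊗ₖ (1 : Matrix ιZ ιZ ℂ)) := by
    rw [h1, h2]; simp only [mul_assoc]
  rw [h3, ptrace_rmul, ptrace_lmul, ptrace_comm, ← mul_assoc ((1 : Matrix ιW ιW ℂ) ⊗ₖ S),
    ← mul_kronecker_mul, one_mul]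

lemma eq_zero_of_trace_conjTranspose_mul_self {m : Type*} [Fintype m] [DecidableEq m]
    (Y : Matrix m m ℂ) (h : (Yᴴ * Y).trace = 0) : Y = 0 := by
  have key : ∑ i, ∑ j, Complex.normSq (Y j i) = 0 := by
    have e : (Yᴴ * Y).trace = ((∑ i, ∑ j, Complex.normSq (Y j i) : ℝ) : ℂ) := by
      push_cast
      simp only [Matrix.trace, Matrix.diag, Matrix.mul_apply, Matrix.conjTranspose_apply]
      refine Finset.sum_congr rfl fun i _ => Finset.sum_congr rfl fun j _ => ?_
      simp [Complex.star_def, Complex.normSq_eq_conj_mul_self]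
    rw [e] at h
    exact_mod_cast h
  ext i j
  have h1 : ∀ i ∈ Finset.univ (α := m), (0:ℝ) ≤ ∑ j, Complex.normSq (Y j i) :=
    fun i _ => Finset.sum_nonneg fun j _ => Complex.normSq_nonneg _
  have h2 := (Finset.sum_eq_zero_iff_of_nonneg h1).mp key j (Finset.mem_univ j)
  have h3 : ∀ k ∈ Finset.univ (α := m), (0:ℝ) ≤ Complex.normSq (Y k j) :=
    fun k _ => Complex.normSq_nonneg _
  have h4 := (Finset.sum_eq_zero_iff_of_nonneg h3).mp h2 i (Finset.mem_univ i)
  simpa using Complex.normSq_eq_zero.mp h4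

end S2Aux

open S2Aux

/-- Given orthogonal families of nonzero (Hermitian, idempotent) projections
`Δ_k` on `𝒲` and `Λ_k` on `𝒵`, set `Π = Σ_k Δ_k ⊗ Λ_k`.  If `A` is a unitary operator on
`𝒲 ⊗ 𝒵` commuting with `Π` such that `⟨H, A⟩ = 0` for every Hermitian `H` with
`im(H) ⊆ im(Π)` and `Tr_𝒵(H) = 0`, then `Π A Π = Π (W ⊗ 1) Π` for some unitary `W` on `𝒲`. -/
theorem statement2 {ιW ιZ : Type*} [Fintype ιW] [Fintype ιZ] [DecidableEq ιW] [DecidableEq ιZ]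
    (n : ℕ) (Δ : Fin n → Matrix ιW ιW ℂ) (Λ : Fin n → Matrix ιZ ιZ ℂ)
    (hΔproj : ∀ k, (Δ k).IsHermitian ∧ Δ k * Δ k = Δ k)
    (hΔne : ∀ k, Δ k ≠ 0)
    (hΔorth : ∀ j k, j ≠ k → Δ j * Δ k = 0)
    (hΛproj : ∀ k, (Λ k).IsHermitian ∧ Λ k * Λ k = Λ k)
    (hΛne : ∀ k, Λ k ≠ 0)
    (hΛorth : ∀ j k, j ≠ k → Λ j * Λ k = 0)
    (A : Matrix (ιW × ιZ) (ιW × ιZ) ℂ)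
    (hAunitary : A ∈ Matrix.unitaryGroup (ιW × ιZ) ℂ)
    (hAcomm : A * (∑ k, Δ k ⊗ₖ Λ k) = (∑ k, Δ k ⊗ₖ Λ k) * A)
    (hA : ∀ H : Matrix (ιW × ιZ) (ιW × ιZ) ℂ, H.IsHermitian →
      LinearMap.range H.mulVecLin ≤ LinearMap.range (∑ k, Δ k ⊗ₖ Λ k).mulVecLin →
      ptraceZ2 H = 0 → (Hᴴ * A).trace = 0) :
    ∃ W ∈ Matrix.unitaryGroup ιW ℂ,
      (∑ k, Δ k ⊗ₖ Λ k) * A * (∑ k, Δ k ⊗ₖ Λ k) =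
      (∑ k, Δ k ⊗ₖ Λ k) * (W ⊗ₖ (1 : Matrix ιZ ιZ ℂ)) * (∑ k, Δ k ⊗ₖ Λ k) := by
  classical
  have hΔh : ∀ k, (Δ k)ᴴ = Δ k := fun k => (hΔproj k).1
  have hΔi : ∀ k, Δ k * Δ k = Δ k := fun k => (hΔproj k).2
  have hΛh : ∀ k, (Λ k)ᴴ = Λ k := fun k => (hΛproj k).1
  have hΛi : ∀ k, Λ k * Λ k = Λ k := fun k => (hΛproj k).2
  have hAAH : A * Aᴴ = 1 := by
    have := Matrix.mem_unitaryGroup_iff.mp hAunitary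
    rwa [Matrix.star_eq_conjTranspose] at this
  have hAHA : Aᴴ * A = 1 := by
    have := Matrix.mem_unitaryGroup_iff'.mp hAunitary
    rwa [Matrix.star_eq_conjTranspose] at this
  set Pr : Matrix (ιW × ιZ) (ιW × ιZ) ℂ := ∑ k, Δ k ⊗ₖ Λ k with hPrdef
  have hPrH : Prᴴ = Pr := by
    rw [hPrdef, Matrix.conjTranspose_sum]
    exact Finset.sum_congr rfl fun k _ => by rw [kron_conjTranspose, hΔh, hΛh]
  have hPrP : Pr * Pr = Pr := by
    rw [hPrdef, sum_mul_sum_of_orth _ _ (fun j k hjk => by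
      rw [← mul_kronecker_mul, hΔorth j k hjk, zero_kronecker])]
    exact Finset.sum_congr rfl fun k _ => by rw [← mul_kronecker_mul, hΔi, hΛi]
  -- compression formula
  have compress : ∀ M : Matrix ιW ιW ℂ,
      Pr * (M ⊗ₖ (1 : Matrix ιZ ιZ ℂ)) * Pr = ∑ k, (Δ k * M * Δ k) ⊗ₖ Λ k := by
    intro M
    rw [mul_assoc, hPrdef]
    have h1 : (M ⊗ₖ (1 : Matrix ιZ ιZ ℂ)) * (∑ k, Δ k ⊗ₖ Λ k) = ∑ k, (M * Δ k) ⊗ₖ Λ k := by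
      rw [Finset.mul_sum]
      exact Finset.sum_congr rfl fun k _ => by rw [← mul_kronecker_mul, one_mul]
    rw [h1, sum_mul_sum_of_orth _ _ (fun j k hjk => by
      rw [← mul_kronecker_mul, hΛorth j k hjk, kronecker_zero])]
    exact Finset.sum_congr rfl fun k _ => by rw [← mul_kronecker_mul, hΛi, ← mul_assoc]
  have hΛtr : ∀ k, (Λ k).trace ≠ 0 := by
    intro k h
    refine hΛne k (eq_zero_of_trace_conjTranspose_mul_self _ ?_)
    rw [hΛh k, hΛi k, h]
  set C : Fin n → Matrix ιW ιW ℂ :=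
    fun k => ptraceZ2 (((1 : Matrix ιW ιW ℂ) ⊗ₖ Λ k) * A) with hCdef
  set B : Matrix ιW ιW ℂ := ∑ k, ((Λ k).trace)⁻¹ • (Δ k * C k * Δ k) with hBdef
  -- partial trace of the compressed unitary
  have hptr_term : ∀ j k, ptraceZ2 ((Δ j ⊗ₖ Λ j) * A * (Δ k ⊗ₖ Λ k))
      = if j = k then Δ k * C k * Δ k else 0 := by
    intro j k
    rw [ptrace_sandwich]
    by_cases h : j = k
    · subst h
      rw [hΛi j, if_pos rfl]
    · rw [hΛorth k j (Ne.symm h), if_neg h, kronecker_zero, zero_mul, ptrace_zero,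
        mul_zero, zero_mul]
  have hPAP : ptraceZ2 (Pr * A * Pr) = ∑ k, Δ k * C k * Δ k := by
    have e : Pr * A * Pr = ∑ j, ∑ k, (Δ j ⊗ₖ Λ j) * A * (Δ k ⊗ₖ Λ k) := by
      rw [hPrdef]
      rw [Finset.sum_mul, Finset.sum_mul]
      refine Finset.sum_congr rfl fun j _ => ?_
      rw [Finset.mul_sum]
    rw [e, ptrace_sum]
    have e2 : ∀ j, ptraceZ2 (∑ k, (Δ j ⊗ₖ Λ j) * A * (Δ k ⊗ₖ Λ k))
        = Δ j * C j * Δ j := by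
      intro j
      rw [ptrace_sum]
      simp only [hptr_term]
      simp [Finset.sum_ite_eq]
    exact Finset.sum_congr rfl fun j _ => e2 j
  have hΔBΔ : ∀ k, Δ k * B * Δ k = ((Λ k).trace)⁻¹ • (Δ k * C k * Δ k) := by
    intro k
    rw [hBdef, Finset.mul_sum, Finset.sum_mul]
    rw [Finset.sum_eq_single k (fun j _ hj => by
      rw [mul_smul_comm, smul_mul_assoc]
      have : Δ k * (Δ j * C j * Δ j) * Δ k = 0 := by
        have e : Δ k * (Δ j * C j * Δ j) * Δ k = (Δ k * Δ j) * (C j * (Δ j * Δ k)) := by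
          simp only [mul_assoc]
        rw [e, hΔorth k j (Ne.symm hj), zero_mul]
      rw [this, smul_zero]) (by simp)]
    rw [mul_smul_comm, smul_mul_assoc]
    congr 1
    have e : Δ k * (Δ k * C k * Δ k) * Δ k = (Δ k * Δ k) * C k * (Δ k * Δ k) := by
      simp only [mul_assoc]
    rw [e, hΔi]
  have hPBP : ptraceZ2 (Pr * (B ⊗ₖ (1 : Matrix ιZ ιZ ℂ)) * Pr) = ∑ k, Δ k * C k * Δ k := by
    rw [compress B, ptrace_sum]
    refine Finset.sum_congr rfl fun k _ => ?_
    rw [ptrace_kron, hΔBΔ k, smul_smul, mul_inv_cancel₀ (hΛtr k), one_smul]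
  -- Y and its vanishing
  set Y : Matrix (ιW × ιZ) (ιW × ιZ) ℂ :=
    Pr * A * Pr - Pr * (B ⊗ₖ (1 : Matrix ιZ ιZ ℂ)) * Pr with hYdef
  have hYtr : ptraceZ2 Y = 0 := by
    rw [hYdef, ptrace_sub, hPAP, hPBP, sub_self]
  have hsand : ∀ M : Matrix (ιW × ιZ) (ιW × ιZ) ℂ, Pr * (Pr * M * Pr) * Pr = Pr * M * Pr := by
    intro M
    have e : Pr * (Pr * M * Pr) * Pr = (Pr * Pr) * M * (Pr * Pr) := by
      simp only [mul_assoc]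
    rw [e, hPrP]
  have hYP : Pr * Y * Pr = Y := by
    rw [hYdef, mul_sub, sub_mul, hsand, hsand]
  have hYPH : Pr * Yᴴ * Pr = Yᴴ := by
    have h := congrArg Matrix.conjTranspose hYP
    rw [Matrix.conjTranspose_mul, Matrix.conjTranspose_mul, hPrH, ← mul_assoc] at h
    exact h
  have range_of : ∀ M : Matrix (ιW × ιZ) (ιW × ιZ) ℂ, Pr * M * Pr = M →
      LinearMap.range M.mulVecLin ≤ LinearMap.range Pr.mulVecLin := by
    intro M hM
    conv_lhs => rw [← hM]
    rw [mul_assoc, Matrix.mulVecLin_mul]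
    exact LinearMap.range_comp_le_range _ _
  have hYA : (Yᴴ * A).trace = 0 := by
    have hH1 : (Y + Yᴴ).IsHermitian := by
      unfold Matrix.IsHermitian
      rw [Matrix.conjTranspose_add, Matrix.conjTranspose_conjTranspose, add_comm]
    have hH1P : Pr * (Y + Yᴴ) * Pr = Y + Yᴴ := by
      rw [mul_add, add_mul, hYP, hYPH]
    have hH1tr : ptraceZ2 (Y + Yᴴ) = 0 := by
      rw [ptrace_add, ptrace_conjTranspose, hYtr]; simp
    have h1 := hA (Y + Yᴴ) hH1 (range_of _ hH1P) hH1tr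
    rw [show ((Y + Yᴴ)ᴴ) = Y + Yᴴ from hH1, add_mul, Matrix.trace_add] at h1
    -- second test operator
    have hH2 : (Complex.I • (Y - Yᴴ)).IsHermitian := by
      unfold Matrix.IsHermitian
      rw [Matrix.conjTranspose_smul, Matrix.conjTranspose_sub,
        Matrix.conjTranspose_conjTranspose]
      rw [show star Complex.I = -Complex.I by simp [Complex.ext_iff]]
      rw [neg_smul, ← smul_neg, neg_sub]
    have hH2P : Pr * (Complex.I • (Y - Yᴴ)) * Pr = Complex.I • (Y - Yᴴ) := by
      rw [mul_smul_comm, smul_mul_assoc, mul_sub, sub_mul, hYP, hYPH]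
    have hH2tr : ptraceZ2 (Complex.I • (Y - Yᴴ)) = 0 := by
      rw [ptrace_smul, ptrace_sub, ptrace_conjTranspose, hYtr]; simp
    have h2 := hA _ hH2 (range_of _ hH2P) hH2tr
    rw [show ((Complex.I • (Y - Yᴴ))ᴴ) = Complex.I • (Y - Yᴴ) from hH2,
      smul_mul_assoc, Matrix.trace_smul, sub_mul, Matrix.trace_sub] at h2
    have h3 : (Y * A).trace - (Yᴴ * A).trace = 0 := by
      have := smul_eq_zero.mp h2
      rcases this with h | h
      · exact absurd h Complex.I_ne_zero
      · exact h
    have h4 : (Y * A).trace = (Yᴴ * A).trace := sub_eq_zero.mp h3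
    rw [h4] at h1
    linear_combination h1 / 2
  -- conclude Y = 0, hence Pr A Pr = Pr (B ⊗ 1) Pr
  have hYzero : Y = 0 := by
    apply eq_zero_of_trace_conjTranspose_mul_self
    have e1 : (Yᴴ * (Pr * A * Pr)).trace = (Yᴴ * A).trace := by
      rw [show Yᴴ * (Pr * A * Pr) = (Yᴴ * Pr * A) * Pr by simp only [mul_assoc],
        Matrix.trace_mul_comm,
        show Pr * (Yᴴ * Pr * A) = (Pr * Yᴴ * Pr) * A by simp only [mul_assoc], hYPH]
    have e2 : (Yᴴ * (Pr * (B ⊗ₖ (1 : Matrix ιZ ιZ ℂ)) * Pr)).trace = 0 := by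
      rw [show Yᴴ * (Pr * (B ⊗ₖ (1 : Matrix ιZ ιZ ℂ)) * Pr)
            = (Yᴴ * Pr * (B ⊗ₖ (1 : Matrix ιZ ιZ ℂ))) * Pr by simp only [mul_assoc],
        Matrix.trace_mul_comm,
        show Pr * (Yᴴ * Pr * (B ⊗ₖ (1 : Matrix ιZ ιZ ℂ)))
            = (Pr * Yᴴ * Pr) * (B ⊗ₖ (1 : Matrix ιZ ιZ ℂ)) by simp only [mul_assoc],
        hYPH, trace_pair, hYtr]
      simp
    have e3 : Yᴴ * Y = Yᴴ * (Pr * A * Pr) - Yᴴ * (Pr * (B ⊗ₖ (1 : Matrix ιZ ιZ ℂ)) * Pr) := by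
      rw [hYdef, mul_sub]
    rw [e3, Matrix.trace_sub, e1, e2, hYA, sub_zero]
  have hXB : Pr * A * Pr = Pr * (B ⊗ₖ (1 : Matrix ιZ ιZ ℂ)) * Pr := by
    have := sub_eq_zero.mp (hYdef ▸ hYzero)
    exact this
  -- the compressed blocks
  have hXsum : Pr * A * Pr = ∑ k, (Δ k * B * Δ k) ⊗ₖ Λ k := by
    rw [hXB, compress]
  have hXHsum : (Pr * A * Pr)ᴴ = ∑ k, (Δ k * Bᴴ * Δ k) ⊗ₖ Λ k := by
    rw [hXsum, Matrix.conjTranspose_sum]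
    refine Finset.sum_congr rfl fun k _ => ?_
    rw [kron_conjTranspose, Matrix.conjTranspose_mul, Matrix.conjTranspose_mul, hΔh, hΛh,
      mul_assoc]
  -- unitarity relations on the blocks
  have hcomm' : Pr * Aᴴ = Aᴴ * Pr := by
    have h := congrArg Matrix.conjTranspose hAcomm
    rw [Matrix.conjTranspose_mul, Matrix.conjTranspose_mul, hPrH] at h
    exact h
  have hXH : (Pr * A * Pr)ᴴ = Pr * Aᴴ * Pr := by
    rw [Matrix.conjTranspose_mul, Matrix.conjTranspose_mul, hPrH]
    simp only [mul_assoc]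
  have hPAPr : Pr * (A * Pr) = A * Pr := by
    rw [← mul_assoc, ← hAcomm, mul_assoc, hPrP]
  have hPAHPr : Pr * (Aᴴ * Pr) = Aᴴ * Pr := by
    rw [← mul_assoc, hcomm', mul_assoc, hPrP]
  have hXXH : (Pr * A * Pr) * (Pr * A * Pr)ᴴ = Pr := by
    rw [hXH]
    calc (Pr * A * Pr) * (Pr * Aᴴ * Pr)
        = Pr * (A * ((Pr * Pr) * (Aᴴ * Pr))) := by simp only [mul_assoc]
      _ = Pr * (A * (Pr * (Aᴴ * Pr))) := by rw [hPrP]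
      _ = Pr * (A * (Aᴴ * Pr)) := by rw [hPAHPr]
      _ = Pr * ((A * Aᴴ) * Pr) := by rw [← mul_assoc A Aᴴ Pr]
      _ = Pr * Pr := by rw [hAAH, one_mul]
      _ = Pr := hPrP
  have hXHX : (Pr * A * Pr)ᴴ * (Pr * A * Pr) = Pr := by
    rw [hXH]
    calc (Pr * Aᴴ * Pr) * (Pr * A * Pr)
        = Pr * (Aᴴ * ((Pr * Pr) * (A * Pr))) := by simp only [mul_assoc]
      _ = Pr * (Aᴴ * (Pr * (A * Pr))) := by rw [hPrP]
      _ = Pr * (Aᴴ * (A * Pr)) := by rw [hPAPr]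
      _ = Pr * ((Aᴴ * A) * Pr) := by rw [← mul_assoc Aᴴ A Pr]
      _ = Pr * Pr := by rw [hAHA, one_mul]
      _ = Pr := hPrP
  -- extraction of the block relations
  have extract : ∀ M : Fin n → Matrix ιW ιW ℂ,
      (∑ k, M k ⊗ₖ Λ k) = 0 → ∀ m, M m = 0 := by
    intro M hM m
    have h1 : (∑ k, M k ⊗ₖ Λ k) * ((1 : Matrix ιW ιW ℂ) ⊗ₖ Λ m) = M m ⊗ₖ Λ m := by
      rw [Finset.sum_mul]
      rw [Finset.sum_eq_single m (fun k _ hk => by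
        rw [← mul_kronecker_mul, hΛorth k m hk, kronecker_zero]) (by simp)]
      rw [← mul_kronecker_mul, mul_one, hΛi]
    rw [hM, zero_mul] at h1
    have h2 : ptraceZ2 (M m ⊗ₖ Λ m) = 0 := by rw [← h1, ptrace_zero]
    rw [ptrace_kron] at h2
    exact (smul_eq_zero.mp h2).resolve_left (hΛtr m)
  have block_rel : ∀ (F G : Fin n → Matrix ιW ιW ℂ),
      (∑ j, F j ⊗ₖ Λ j) * (∑ k, G k ⊗ₖ Λ k) = Pr →
      ∀ m, F m * G m = Δ m := by
    intro F G hFG m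
    have e : (∑ j, F j ⊗ₖ Λ j) * (∑ k, G k ⊗ₖ Λ k) = ∑ k, (F k * G k) ⊗ₖ Λ k := by
      rw [sum_mul_sum_of_orth _ _ (fun j k hjk => by
        rw [← mul_kronecker_mul, hΛorth j k hjk, kronecker_zero])]
      exact Finset.sum_congr rfl fun k _ => by rw [← mul_kronecker_mul, hΛi]
    rw [e, hPrdef] at hFG
    have hz : (∑ k, (F k * G k - Δ k) ⊗ₖ Λ k) = 0 := by
      have : ∑ k, (F k * G k - Δ k) ⊗ₖ Λ k
          = (∑ k, (F k * G k) ⊗ₖ Λ k) - ∑ k, Δ k ⊗ₖ Λ k := by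
        rw [← Finset.sum_sub_distrib]
        exact Finset.sum_congr rfl fun k _ => sub_kron _ _ _
      rw [this, hFG, sub_self]
    have := extract _ hz m
    exact sub_eq_zero.mp this
  have hBBH : ∀ m, (Δ m * B * Δ m) * (Δ m * Bᴴ * Δ m) = Δ m := by
    refine block_rel _ _ ?_
    rw [← hXsum, ← hXHsum]
    exact hXXH
  have hBHB : ∀ m, (Δ m * Bᴴ * Δ m) * (Δ m * B * Δ m) = Δ m := by
    refine block_rel _ _ ?_
    rw [← hXsum, ← hXHsum]
    exact hXHX
  -- build the unitary W
  set D : Matrix ιW ιW ℂ := ∑ k, Δ k with hDdef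
  set S : Matrix ιW ιW ℂ := ∑ k, Δ k * B * Δ k with hSdef
  set Sh : Matrix ιW ιW ℂ := ∑ k, Δ k * Bᴴ * Δ k with hShdef
  have hDD : D * D = D := by
    rw [hDdef, sum_mul_sum_of_orth _ _ hΔorth]
    exact Finset.sum_congr rfl fun k _ => hΔi k
  have hDH : Dᴴ = D := by
    rw [hDdef, Matrix.conjTranspose_sum]
    exact Finset.sum_congr rfl fun k _ => hΔh k
  have hSH : Sᴴ = Sh := by
    rw [hSdef, hShdef, Matrix.conjTranspose_sum]
    refine Finset.sum_congr rfl fun k _ => ?_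
    rw [Matrix.conjTranspose_mul, Matrix.conjTranspose_mul, hΔh, mul_assoc]
  have horth1 : ∀ j k, j ≠ k → (Δ j * B * Δ j) * (Δ k * Bᴴ * Δ k) = 0 := by
    intro j k h
    have e : (Δ j * B * Δ j) * (Δ k * Bᴴ * Δ k)
        = (Δ j * B) * ((Δ j * Δ k) * (Bᴴ * Δ k)) := by simp only [mul_assoc]
    rw [e, hΔorth j k h, zero_mul, mul_zero]
  have horth2 : ∀ j k, j ≠ k → (Δ j * Bᴴ * Δ j) * (Δ k * B * Δ k) = 0 := by
    intro j k h
    have e : (Δ j * Bᴴ * Δ j) * (Δ k * B * Δ k)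
        = (Δ j * Bᴴ) * ((Δ j * Δ k) * (B * Δ k)) := by simp only [mul_assoc]
    rw [e, hΔorth j k h, zero_mul, mul_zero]
  have hSSh : S * Sh = D := by
    rw [hSdef, hShdef, hDdef, sum_mul_sum_of_orth _ _ horth1]
    exact Finset.sum_congr rfl fun k _ => hBBH k
  have hShS : Sh * S = D := by
    rw [hSdef, hShdef, hDdef, sum_mul_sum_of_orth _ _ horth2]
    exact Finset.sum_congr rfl fun k _ => hBHB k
  have hSD : S * D = S := by
    rw [hSdef, hDdef, sum_mul_sum_of_orth _ _ (fun j k h => by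
      have e : (Δ j * B * Δ j) * Δ k = (Δ j * B) * (Δ j * Δ k) := by simp only [mul_assoc]
      rw [e, hΔorth j k h, mul_zero])]
    refine Finset.sum_congr rfl fun k _ => ?_
    have e : (Δ k * B * Δ k) * Δ k = (Δ k * B) * (Δ k * Δ k) := by simp only [mul_assoc]
    rw [e, hΔi]
  have hDS : D * S = S := by
    rw [hSdef, hDdef, sum_mul_sum_of_orth _ _ (fun j k h => by
      have e : Δ j * (Δ k * B * Δ k) = (Δ j * Δ k) * (B * Δ k) := by simp only [mul_assoc]
      rw [e, hΔorth j k h, zero_mul])]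
    refine Finset.sum_congr rfl fun k _ => ?_
    have e : Δ k * (Δ k * B * Δ k) = (Δ k * Δ k) * (B * Δ k) := by simp only [mul_assoc]
    rw [e, hΔi, ← mul_assoc]
  have hDSh : D * Sh = Sh := by
    rw [hShdef, hDdef, sum_mul_sum_of_orth _ _ (fun j k h => by
      have e : Δ j * (Δ k * Bᴴ * Δ k) = (Δ j * Δ k) * (Bᴴ * Δ k) := by simp only [mul_assoc]
      rw [e, hΔorth j k h, zero_mul])]
    refine Finset.sum_congr rfl fun k _ => ?_
    have e : Δ k * (Δ k * Bᴴ * Δ k) = (Δ k * Δ k) * (Bᴴ * Δ k) := by simp only [mul_assoc]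
    rw [e, hΔi, ← mul_assoc]
  have hShD : Sh * D = Sh := by
    rw [hShdef, hDdef, sum_mul_sum_of_orth _ _ (fun j k h => by
      have e : (Δ j * Bᴴ * Δ j) * Δ k = (Δ j * Bᴴ) * (Δ j * Δ k) := by simp only [mul_assoc]
      rw [e, hΔorth j k h, mul_zero])]
    refine Finset.sum_congr rfl fun k _ => ?_
    have e : (Δ k * Bᴴ * Δ k) * Δ k = (Δ k * Bᴴ) * (Δ k * Δ k) := by simp only [mul_assoc]
    rw [e, hΔi]
  set W : Matrix ιW ιW ℂ := 1 - D + S with hWdef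
  have hWH : Wᴴ = 1 - D + Sh := by
    rw [hWdef, Matrix.conjTranspose_add, Matrix.conjTranspose_sub, Matrix.conjTranspose_one,
      hDH, hSH]
  have hWunit : W ∈ Matrix.unitaryGroup ιW ℂ := by
    rw [Matrix.mem_unitaryGroup_iff, Matrix.star_eq_conjTranspose, hWH, hWdef]
    have expand : (1 - D + S) * (1 - D + Sh)
        = (1 - D) * (1 - D) + (1 - D) * Sh + S * (1 - D) + S * Sh := by noncomm_ring
    rw [expand]
    have e1 : (1 - D) * (1 - D) = 1 - D := by
      rw [sub_mul, one_mul, mul_sub, mul_one, hDD, sub_self, sub_zero]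
    have e2 : (1 - D) * Sh = 0 := by rw [sub_mul, one_mul, hDSh, sub_self]
    have e3 : S * (1 - D) = 0 := by rw [mul_sub, mul_one, hSD, sub_self]
    rw [e1, e2, e3, hSSh, add_zero, add_zero, sub_add_cancel]
  have hΔD : ∀ k, Δ k * D = Δ k := by
    intro k
    rw [hDdef, Finset.mul_sum]
    rw [Finset.sum_eq_single k (fun j _ hj => hΔorth k j (Ne.symm hj)) (by simp)]
    exact hΔi k
  have hΔS : ∀ k, Δ k * S = Δ k * B * Δ k := by
    intro k
    rw [hSdef, Finset.mul_sum]
    rw [Finset.sum_eq_single k (fun j _ hj => by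
      have e : Δ k * (Δ j * B * Δ j) = (Δ k * Δ j) * (B * Δ j) := by simp only [mul_assoc]
      rw [e, hΔorth k j (Ne.symm hj), zero_mul]) (by simp)]
    have e : Δ k * (Δ k * B * Δ k) = (Δ k * Δ k) * (B * Δ k) := by simp only [mul_assoc]
    rw [e, hΔi, ← mul_assoc]
  have hWblock : ∀ k, Δ k * W * Δ k = Δ k * B * Δ k := by
    intro k
    rw [hWdef, mul_add, mul_sub, mul_one, hΔD, sub_self, zero_add, hΔS]
    have e : (Δ k * B * Δ k) * Δ k = (Δ k * B) * (Δ k * Δ k) := by simp only [mul_assoc]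
    rw [e, hΔi]
  refine ⟨W, hWunit, ?_⟩
  rw [hXsum, compress W]
  exact Finset.sum_congr rfl fun k _ => by rw [hWblock k]
end

section
/- Let 𝒳, 𝒴, 𝒵 be finite-dimensional complex Hilbert spaces, let {Δ_1,…,Δ_n} be an orthogonal set of nonzero projection operators on 𝒳⊗𝒴, let {Λ_1,…,Λ_n} be an orthogonal set of nonzero projection operators on 𝒵, let Π = Σ_{k=1}^n Δ_k⊗Λ_k, and let U be a unitary operator on 𝒳⊗𝒴⊗𝒵 that is 𝒴→𝒳 causal on im(Π). Then for every linear operator X on 𝒳 there exists a linear operator W on 𝒳⊗𝒴 such that Π U*(X⊗1_{𝒴⊗𝒵})U Π = Π(W⊗1_𝒵)Π. -/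
open Matrix
open scoped Kronecker ComplexOrder

namespace CausalAux3

variable {m n : Type*} [Fintype m] [Fintype n]

theorem kron_conjTranspose (A : Matrix m m ℂ) (B : Matrix n n ℂ) :
    (A ⊗ₖ B)ᴴ = Aᴴ ⊗ₖ Bᴴ := by
  ext ⟨i, j⟩ ⟨k, l⟩
  simp [conjTranspose_apply, kroneckerMap_apply, mul_comm]

theorem posSemidef_kron {A : Matrix m m ℂ} {B : Matrix n n ℂ}
    (hA : A.PosSemidef) (hB : B.PosSemidef) : (A ⊗ₖ B).PosSemidef := by
  exact hA.kronecker hB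

theorem posSemidef_ofReal_smul {r : ℝ} (hr : 0 ≤ r) {M : Matrix m m ℂ}
    (hM : M.PosSemidef) : ((r : ℂ) • M).PosSemidef := by
  refine Matrix.PosSemidef.of_dotProduct_mulVec_nonneg ?_ ?_
  · rw [Matrix.IsHermitian, conjTranspose_smul, hM.1.eq]
    simp
  · intro x
    rw [smul_mulVec, dotProduct_smul]
    exact smul_nonneg (by exact_mod_cast Complex.zero_le_real.mpr hr) (hM.dotProduct_mulVec_nonneg x)

theorem posSemidef_sum {κ : Type*} (s : Finset κ) (f : κ → Matrix m m ℂ)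
    (h : ∀ k ∈ s, (f k).PosSemidef) : (∑ k ∈ s, f k).PosSemidef := by
  exact Finset.sum_induction f _ (fun a b ha hb => ha.add hb) Matrix.PosSemidef.zero h

theorem posSemidef_vecMulVec (w : m → ℂ) : (vecMulVec w (star w)).PosSemidef := by
  have : vecMulVec w (star w) =
      (Matrix.of fun (_ : Unit) j => star (w j))ᴴ * (Matrix.of fun (_ : Unit) j => star (w j)) := by
    ext i j
    simp [vecMulVec_apply, Matrix.mul_apply, conjTranspose_apply]
  rw [this]
  exact Matrix.posSemidef_conjTranspose_mul_self _

theorem trace_mul_vecMulVec (M : Matrix m m ℂ) (u v : m → ℂ) :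
    trace (M * vecMulVec u v) = v ⬝ᵥ (M *ᵥ u) := by
  simp only [Matrix.trace, Matrix.diag_apply, Matrix.mul_apply, vecMulVec_apply,
    dotProduct, Matrix.mulVec, Finset.mul_sum]
  exact Finset.sum_congr rfl fun i _ => Finset.sum_congr rfl fun j _ => by ring

theorem mul_vecMulVec (M : Matrix m m ℂ) (u v : m → ℂ) :
    M * vecMulVec u v = vecMulVec (M *ᵥ u) v := by
  ext i j
  simp only [Matrix.mul_apply, vecMulVec_apply, Matrix.mulVec, dotProduct, Finset.sum_mul]
  exact Finset.sum_congr rfl fun k _ => by ring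

theorem eq_zero_of_quadratic [DecidableEq m] (C : Matrix m m ℂ)
    (h : ∀ x, star x ⬝ᵥ (C *ᵥ x) = 0) : C = 0 := by
  have hbil : ∀ x y : m → ℂ, star x ⬝ᵥ (C *ᵥ y) = 0 := by
    intro x y
    have h1 := h (x + y)
    have h2 := h (x + Complex.I • y)
    simp only [star_add, mulVec_add, dotProduct_add, add_dotProduct, h, star_smul,
      smul_dotProduct, dotProduct_smul, mulVec_smul, smul_zero, zero_add, add_zero,
      smul_eq_mul, RCLike.star_def, Complex.conj_I, neg_mul] at h1 h2
    linear_combination h1 / 2 - Complex.I / 2 * h2 +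
      ((star x ⬝ᵥ C *ᵥ y - star y ⬝ᵥ C *ᵥ x) / 2) * Complex.I_mul_I
  ext i j
  have hs : star (Pi.single i (1 : ℂ)) = (Pi.single i 1 : m → ℂ) := by
    ext k
    rcases eq_or_ne k i with rfl | hk
    · simp
    · simp [Pi.single_eq_of_ne hk]
  have := hbil (Pi.single i 1) (Pi.single j 1)
  rw [hs] at this
  simpa [dotProduct, Matrix.mulVec, Pi.single_apply, Finset.sum_ite_eq] using this

variable {ιX ιY ιZ : Type*} [Fintype ιX] [Fintype ιY] [Fintype ιZ]
  [DecidableEq ιX] [DecidableEq ιY] [DecidableEq ιZ]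

set_option linter.unusedSectionVars false

/-- `Fm M T = Tr_Z (M * (1 ⊗ T))`. -/
noncomputable def Fm (M : Matrix ((ιX × ιY) × ιZ) ((ιX × ιY) × ιZ) ℂ) (T : Matrix ιZ ιZ ℂ) :
    Matrix (ιX × ιY) (ιX × ιY) ℂ :=
  Matrix.of fun w w' => ∑ s, ∑ s', M (w, s) (w', s') * T s' s

theorem Fm_zero (M : Matrix ((ιX × ιY) × ιZ) ((ιX × ιY) × ιZ) ℂ) :
    Fm M (0 : Matrix ιZ ιZ ℂ) = 0 := by
  ext w w'
  simp [Fm]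

theorem trace_mul_kron (M : Matrix ((ιX × ιY) × ιZ) ((ιX × ιY) × ιZ) ℂ)
    (S : Matrix (ιX × ιY) (ιX × ιY) ℂ) (T : Matrix ιZ ιZ ℂ) :
    trace (M * (S ⊗ₖ T)) = trace (Fm M T * S) := by
  have lhs : trace (M * (S ⊗ₖ T)) =
      ∑ w : ιX × ιY, ∑ s : ιZ, ∑ w' : ιX × ιY, ∑ s' : ιZ,
        M (w, s) (w', s') * S w' w * T s' s := by
    rw [Matrix.trace]
    simp only [Matrix.diag_apply, Matrix.mul_apply, Matrix.kroneckerMap_apply]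
    rw [Fintype.sum_prod_type]
    refine Finset.sum_congr rfl fun w _ => ?_
    refine Finset.sum_congr rfl fun s _ => ?_
    rw [Fintype.sum_prod_type]
    exact Finset.sum_congr rfl fun w' _ => Finset.sum_congr rfl fun s' _ => by ring
  have rhs : trace (Fm M T * S) =
      ∑ w : ιX × ιY, ∑ w' : ιX × ιY, ∑ s : ιZ, ∑ s' : ιZ,
        M (w, s) (w', s') * S w' w * T s' s := by
    rw [Matrix.trace]
    simp only [Matrix.diag_apply, Matrix.mul_apply, Fm, Matrix.of_apply, Finset.sum_mul]
    refine Finset.sum_congr rfl fun w _ => Finset.sum_congr rfl fun w' _ => ?_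
    refine Finset.sum_congr rfl fun s _ => Finset.sum_congr rfl fun s' _ => by ring
  rw [lhs, rhs]
  exact Finset.sum_congr rfl fun w _ => Finset.sum_comm

theorem sum_pair_fst {α β : Type*} [Fintype α] [Fintype β] [DecidableEq α]
    (w : α) (f : α → β → ℂ) :
    (∑ i : α × β, if w = i.1 then f i.1 i.2 else 0) = ∑ p : β, f w p := by
  rw [Fintype.sum_prod_type]
  simp

theorem sum_pair_fst' {α β : Type*} [Fintype α] [Fintype β] [DecidableEq α]
    (w : α) (f : α → β → ℂ) :
    (∑ i : α × β, if i.1 = w then f i.1 i.2 else 0) = ∑ p : β, f w p := by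
  rw [Fintype.sum_prod_type]
  simp

theorem ptraceZ3_mul_left_one (A : Matrix (ιX × ιY) (ιX × ιY) ℂ)
    (M : Matrix ((ιX × ιY) × ιZ) ((ιX × ιY) × ιZ) ℂ) :
    ptraceZ3 ((A ⊗ₖ (1 : Matrix ιZ ιZ ℂ)) * M) = A * ptraceZ3 M := by
  ext w w'
  have h : ∀ z : ιZ, ((A ⊗ₖ (1 : Matrix ιZ ιZ ℂ)) * M) (w, z) (w', z)
      = ∑ u : ιX × ιY, A w u * M (u, z) (w', z) := by
    intro z
    rw [Matrix.mul_apply, Fintype.sum_prod_type]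
    simp [Matrix.kroneckerMap_apply, Matrix.one_apply, ite_mul, zero_mul, mul_ite, mul_zero]
  show (∑ z, ((A ⊗ₖ (1 : Matrix ιZ ιZ ℂ)) * M) (w, z) (w', z)) = _
  rw [Finset.sum_congr rfl fun z _ => h z, Finset.sum_comm]
  simp [Matrix.mul_apply, ptraceZ3, Finset.mul_sum]

theorem ptraceZ3_mul_right_one (C : Matrix (ιX × ιY) (ιX × ιY) ℂ)
    (M : Matrix ((ιX × ιY) × ιZ) ((ιX × ιY) × ιZ) ℂ) :
    ptraceZ3 (M * (C ⊗ₖ (1 : Matrix ιZ ιZ ℂ))) = ptraceZ3 M * C := by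
  ext w w'
  have h : ∀ z : ιZ, (M * (C ⊗ₖ (1 : Matrix ιZ ιZ ℂ))) (w, z) (w', z)
      = ∑ u : ιX × ιY, M (w, z) (u, z) * C u w' := by
    intro z
    rw [Matrix.mul_apply, Fintype.sum_prod_type]
    simp [Matrix.kroneckerMap_apply, Matrix.one_apply, ite_mul, zero_mul, mul_ite, mul_zero,
      mul_comm, mul_left_comm]
  show (∑ z, (M * (C ⊗ₖ (1 : Matrix ιZ ιZ ℂ))) (w, z) (w', z)) = _
  rw [Finset.sum_congr rfl fun z _ => h z, Finset.sum_comm]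
  simp [Matrix.mul_apply, ptraceZ3, Finset.sum_mul]

theorem Fm_one (M : Matrix ((ιX × ιY) × ιZ) ((ιX × ιY) × ιZ) ℂ) :
    Fm M (1 : Matrix ιZ ιZ ℂ) = ptraceZ3 M := by
  ext w w'
  simp [Fm, ptraceZ3, Matrix.one_apply, mul_ite, mul_one, mul_zero]

theorem Fm_one_kron_mul (B : Matrix ιZ ιZ ℂ) (T : Matrix ιZ ιZ ℂ)
    (M : Matrix ((ιX × ιY) × ιZ) ((ιX × ιY) × ιZ) ℂ) :
    Fm (((1 : Matrix (ιX × ιY) (ιX × ιY) ℂ) ⊗ₖ B) * M) T = Fm M (T * B) := by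
  ext w w'
  have h : ∀ s s' : ιZ, (((1 : Matrix (ιX × ιY) (ιX × ιY) ℂ) ⊗ₖ B) * M) (w, s) (w', s')
      = ∑ p : ιZ, B s p * M (w, p) (w', s') := by
    intro s s'
    rw [Matrix.mul_apply]
    have : ∀ i : (ιX × ιY) × ιZ,
        ((1 : Matrix (ιX × ιY) (ιX × ιY) ℂ) ⊗ₖ B) (w, s) i * M i (w', s')
        = if w = i.1 then B s i.2 * M (i.1, i.2) (w', s') else 0 := by
      intro i
      simp [Matrix.kroneckerMap_apply, Matrix.one_apply, ite_mul, zero_mul, one_mul]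
    rw [Finset.sum_congr rfl fun i _ => this i]
    exact sum_pair_fst w fun u p => B s p * M (u, p) (w', s')
  have lhs : (Fm (((1 : Matrix (ιX × ιY) (ιX × ιY) ℂ) ⊗ₖ B) * M) T) w w'
      = ∑ s : ιZ, ∑ s' : ιZ, ∑ p : ιZ, B s p * M (w, p) (w', s') * T s' s := by
    simp only [Fm, Matrix.of_apply]
    refine Finset.sum_congr rfl fun s _ => Finset.sum_congr rfl fun s' _ => ?_
    rw [h s s', Finset.sum_mul]
  have rhs : (Fm M (T * B)) w w'
      = ∑ p : ιZ, ∑ s' : ιZ, ∑ s : ιZ, B s p * M (w, p) (w', s') * T s' s := by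
    simp only [Fm, Matrix.of_apply, Matrix.mul_apply, Finset.mul_sum]
    refine Finset.sum_congr rfl fun p _ => Finset.sum_congr rfl fun s' _ => ?_
    exact Finset.sum_congr rfl fun s _ => by ring
  rw [lhs, rhs]
  rw [Finset.sum_comm]
  conv_rhs => rw [Finset.sum_comm]
  exact Finset.sum_congr rfl fun s' _ => Finset.sum_comm

theorem Fm_mul_one_kron (D : Matrix ιZ ιZ ℂ) (T : Matrix ιZ ιZ ℂ)
    (M : Matrix ((ιX × ιY) × ιZ) ((ιX × ιY) × ιZ) ℂ) :
    Fm (M * ((1 : Matrix (ιX × ιY) (ιX × ιY) ℂ) ⊗ₖ D)) T = Fm M (D * T) := by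
  ext w w'
  have h : ∀ s s' : ιZ, (M * ((1 : Matrix (ιX × ιY) (ιX × ιY) ℂ) ⊗ₖ D)) (w, s) (w', s')
      = ∑ p : ιZ, M (w, s) (w', p) * D p s' := by
    intro s s'
    rw [Matrix.mul_apply]
    have : ∀ j : (ιX × ιY) × ιZ,
        M (w, s) j * ((1 : Matrix (ιX × ιY) (ιX × ιY) ℂ) ⊗ₖ D) j (w', s')
        = if j.1 = w' then M (w, s) (j.1, j.2) * D j.2 s' else 0 := by
      intro j
      simp [Matrix.kroneckerMap_apply, Matrix.one_apply, mul_ite, mul_zero, one_mul, mul_assoc]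
    rw [Finset.sum_congr rfl fun j _ => this j]
    exact sum_pair_fst' w' fun u p => M (w, s) (u, p) * D p s'
  have lhs : (Fm (M * ((1 : Matrix (ιX × ιY) (ιX × ιY) ℂ) ⊗ₖ D)) T) w w'
      = ∑ s : ιZ, ∑ s' : ιZ, ∑ p : ιZ, M (w, s) (w', p) * D p s' * T s' s := by
    simp only [Fm, Matrix.of_apply]
    refine Finset.sum_congr rfl fun s _ => Finset.sum_congr rfl fun s' _ => ?_
    rw [h s s', Finset.sum_mul]
  have rhs : (Fm M (D * T)) w w'
      = ∑ s : ιZ, ∑ p : ιZ, ∑ s' : ιZ, M (w, s) (w', p) * D p s' * T s' s := by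
    simp only [Fm, Matrix.of_apply, Matrix.mul_apply, Finset.mul_sum]
    refine Finset.sum_congr rfl fun s _ => Finset.sum_congr rfl fun p _ => ?_
    exact Finset.sum_congr rfl fun s' _ => by ring
  rw [lhs, rhs]
  exact Finset.sum_congr rfl fun s _ => Finset.sum_comm

theorem ptraceZ3_sandwich (A C : Matrix (ιX × ιY) (ιX × ιY) ℂ) (B D : Matrix ιZ ιZ ℂ)
    (M : Matrix ((ιX × ιY) × ιZ) ((ιX × ιY) × ιZ) ℂ) :
    ptraceZ3 ((A ⊗ₖ B) * M * (C ⊗ₖ D)) = A * Fm M (D * B) * C := by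
  have e1 : (A ⊗ₖ B) = (A ⊗ₖ (1 : Matrix ιZ ιZ ℂ)) *
      ((1 : Matrix (ιX × ιY) (ιX × ιY) ℂ) ⊗ₖ B) := by
    rw [← Matrix.mul_kronecker_mul, mul_one, one_mul]
  have e2 : (C ⊗ₖ D) = ((1 : Matrix (ιX × ιY) (ιX × ιY) ℂ) ⊗ₖ D) *
      (C ⊗ₖ (1 : Matrix ιZ ιZ ℂ)) := by
    rw [← Matrix.mul_kronecker_mul, mul_one, one_mul]
  calc ptraceZ3 ((A ⊗ₖ B) * M * (C ⊗ₖ D))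
      = ptraceZ3 ((A ⊗ₖ (1 : Matrix ιZ ιZ ℂ)) *
          ((((1 : Matrix (ιX × ιY) (ιX × ιY) ℂ) ⊗ₖ B) * M *
            ((1 : Matrix (ιX × ιY) (ιX × ιY) ℂ) ⊗ₖ D)) * (C ⊗ₖ (1 : Matrix ιZ ιZ ℂ)))) := by
        rw [e1, e2]
        congr 1
        simp only [Matrix.mul_assoc]
    _ = A * Fm M (D * B) * C := by
        rw [ptraceZ3_mul_left_one, ptraceZ3_mul_right_one,
          ← Fm_one (((1 : Matrix (ιX × ιY) (ιX × ιY) ℂ) ⊗ₖ B) * M *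
            ((1 : Matrix (ιX × ιY) (ιX × ιY) ℂ) ⊗ₖ D)),
          Fm_mul_one_kron, Fm_one_kron_mul, Matrix.mul_one, Matrix.mul_assoc]

theorem ptraceZ3_kron (S : Matrix (ιX × ιY) (ιX × ιY) ℂ) (T : Matrix ιZ ιZ ℂ) :
    ptraceZ3 (S ⊗ₖ T) = trace T • S := by
  ext w w'
  simp only [ptraceZ3, Matrix.of_apply, Matrix.kroneckerMap_apply, Matrix.smul_apply,
    Matrix.trace, Matrix.diag_apply, smul_eq_mul, Finset.sum_mul]
  exact Finset.sum_congr rfl fun s _ => by ring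

theorem trace_ptraceZ3 (M : Matrix ((ιX × ιY) × ιZ) ((ιX × ιY) × ιZ) ℂ) :
    trace (ptraceZ3 M) = trace M := by
  conv_rhs => rw [Matrix.trace, Fintype.sum_prod_type]
  exact Finset.sum_congr rfl fun w _ => rfl

theorem ptraceZ3_sum {κ : Type*} (s : Finset κ)
    (f : κ → Matrix ((ιX × ιY) × ιZ) ((ιX × ιY) × ιZ) ℂ) :
    ptraceZ3 (∑ k ∈ s, f k) = ∑ k ∈ s, ptraceZ3 (f k) := by
  ext w w'
  simp only [ptraceZ3, Matrix.of_apply, Matrix.sum_apply]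
  rw [Finset.sum_comm]

theorem ptraceZ3_smul (c : ℂ) (M : Matrix ((ιX × ιY) × ιZ) ((ιX × ιY) × ιZ) ℂ) :
    ptraceZ3 (c • M) = c • ptraceZ3 M := by
  ext w w'
  simp [ptraceZ3, Finset.mul_sum]

theorem trace_mul_kron_one (Q : Matrix (ιX × ιY) (ιX × ιY) ℂ) (X : Matrix ιX ιX ℂ) :
    trace (Q * (X ⊗ₖ (1 : Matrix ιY ιY ℂ)))
      = trace (X * Matrix.of fun x x' => ∑ y, Q (x, y) (x', y)) := by
  have lhs : trace (Q * (X ⊗ₖ (1 : Matrix ιY ιY ℂ)))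
      = ∑ x : ιX, ∑ y : ιY, ∑ x' : ιX, X x' x * Q (x, y) (x', y) := by
    rw [Matrix.trace]
    simp only [Matrix.diag_apply, Matrix.mul_apply, Matrix.kroneckerMap_apply]
    rw [Fintype.sum_prod_type]
    refine Finset.sum_congr rfl fun x _ => Finset.sum_congr rfl fun y _ => ?_
    rw [Fintype.sum_prod_type]
    simp only [Matrix.one_apply, mul_ite, mul_zero, mul_one, Finset.sum_ite_eq',
      Finset.mem_univ, if_true]
    exact Finset.sum_congr rfl fun x' _ => by ring
  have rhs : trace (X * Matrix.of fun x x' => ∑ y, Q (x, y) (x', y))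
      = ∑ x' : ιX, ∑ x : ιX, ∑ y : ιY, X x' x * Q (x, y) (x', y) := by
    rw [Matrix.trace]
    simp only [Matrix.diag_apply, Matrix.mul_apply, Matrix.of_apply, Finset.mul_sum]
  rw [lhs, rhs, Finset.sum_congr rfl fun x (_ : x ∈ (Finset.univ : Finset ιX)) =>
    Finset.sum_comm]
  exact Finset.sum_comm

theorem trace_kron_one_one_mul (X : Matrix ιX ιX ℂ)
    (N : Matrix ((ιX × ιY) × ιZ) ((ιX × ιY) × ιZ) ℂ) :
    trace (((X ⊗ₖ (1 : Matrix ιY ιY ℂ)) ⊗ₖ (1 : Matrix ιZ ιZ ℂ)) * N) =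
      trace (X * ptraceYZ3 N) := by
  rw [Matrix.trace_mul_comm, trace_mul_kron, Fm_one, trace_mul_kron_one]
  congr 1

theorem posSemidef_ptraceZ3 {N : Matrix ((ιX × ιY) × ιZ) ((ιX × ιY) × ιZ) ℂ}
    (hN : N.PosSemidef) : (ptraceZ3 N).PosSemidef := by
  refine Matrix.PosSemidef.of_dotProduct_mulVec_nonneg ?_ ?_
  · ext w w'
    simp only [conjTranspose_apply, ptraceZ3, Matrix.of_apply, star_sum]
    refine Finset.sum_congr rfl fun z _ => ?_
    have := congrFun (congrFun hN.1 ((w, z) : (ιX × ιY) × ιZ)) ((w', z) : (ιX × ιY) × ιZ)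
    simpa [conjTranspose_apply] using this
  · intro x
    set e : ιZ → ((ιX × ιY) × ιZ) → ℂ := fun s p => if p.2 = s then x p.1 else 0 with he
    have inner : ∀ (w : ιX × ιY) (t s : ιZ),
        (∑ q : (ιX × ιY) × ιZ, N (w, t) q * if q.2 = s then x q.1 else 0)
        = ∑ w' : ιX × ιY, N (w, t) (w', s) * x w' := by
      intro w t s
      rw [Fintype.sum_prod_type]
      simp [mul_ite, mul_zero]
    have haveR : ∀ s : ιZ, star (e s) ⬝ᵥ (N *ᵥ e s)
        = ∑ w : ιX × ιY, ∑ w' : ιX × ιY, star (x w) * N (w, s) (w', s) * x w' := by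
      intro s
      simp only [dotProduct, Matrix.mulVec, Pi.star_apply, he, apply_ite (star : ℂ → ℂ),
        star_zero, ite_mul, zero_mul]
      rw [Fintype.sum_prod_type]
      simp only [Finset.sum_ite_eq', Finset.mem_univ, if_true]
      refine Finset.sum_congr rfl fun w _ => ?_
      rw [inner w s s, Finset.mul_sum]
      exact Finset.sum_congr rfl fun w' _ => by ring
    have haveL : star x ⬝ᵥ (ptraceZ3 N) *ᵥ x
        = ∑ w : ιX × ιY, ∑ w' : ιX × ιY, ∑ s : ιZ, star (x w) * N (w, s) (w', s) * x w' := by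
      simp only [dotProduct, Matrix.mulVec, ptraceZ3, Matrix.of_apply, Pi.star_apply,
        Finset.sum_mul, Finset.mul_sum]
      refine Finset.sum_congr rfl fun w _ => Finset.sum_congr rfl fun w' _ => ?_
      exact Finset.sum_congr rfl fun z _ => by ring
    have key : star x ⬝ᵥ (ptraceZ3 N) *ᵥ x = ∑ s : ιZ, star (e s) ⬝ᵥ (N *ᵥ e s) := by
      rw [haveL, Finset.sum_congr rfl fun s (_ : s ∈ Finset.univ) => haveR s,
        Finset.sum_congr rfl fun w (_ : w ∈ (Finset.univ : Finset (ιX × ιY))) =>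
          Finset.sum_comm]
      exact Finset.sum_comm
    rw [key]
    exact Finset.sum_nonneg fun s _ => hN.dotProduct_mulVec_nonneg _


end CausalAux3

/-- Given orthogonal families of nonzero projections `Δ_k` on `𝒳 ⊗ 𝒴` and `Λ_k` on `𝒵`,
set `Π = Σ_k Δ_k ⊗ Λ_k`.  If `U` is a unitary on `𝒳 ⊗ 𝒴 ⊗ 𝒵` that is `𝒴 → 𝒳` causal on
`im(Π)`, then for every operator `X` on `𝒳` there is an operator `W` on `𝒳 ⊗ 𝒴` with
`Π U*(X ⊗ 1)U Π = Π (W ⊗ 1) Π`. -/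
theorem statement3 {ιX ιY ιZ : Type*} [Fintype ιX] [Fintype ιY] [Fintype ιZ]
    [DecidableEq ιX] [DecidableEq ιY] [DecidableEq ιZ]
    (n : ℕ) (Δ : Fin n → Matrix (ιX × ιY) (ιX × ιY) ℂ) (Λ : Fin n → Matrix ιZ ιZ ℂ)
    (hΔproj : ∀ k, (Δ k).IsHermitian ∧ Δ k * Δ k = Δ k)
    (hΔne : ∀ k, Δ k ≠ 0)
    (hΔorth : ∀ j k, j ≠ k → Δ j * Δ k = 0)
    (hΛproj : ∀ k, (Λ k).IsHermitian ∧ Λ k * Λ k = Λ k)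
    (hΛne : ∀ k, Λ k ≠ 0)
    (hΛorth : ∀ j k, j ≠ k → Λ j * Λ k = 0)
    (U : Matrix ((ιX × ιY) × ιZ) ((ιX × ιY) × ιZ) ℂ)
    (hU : U ∈ Matrix.unitaryGroup ((ιX × ιY) × ιZ) ℂ)
    (hUcausal : IsCausalOn U (LinearMap.range (∑ k, Δ k ⊗ₖ Λ k).mulVecLin))
    (X : Matrix ιX ιX ℂ) :
    ∃ W : Matrix (ιX × ιY) (ιX × ιY) ℂ,
      (∑ k, Δ k ⊗ₖ Λ k) *
          (Uᴴ * ((X ⊗ₖ (1 : Matrix ιY ιY ℂ)) ⊗ₖ (1 : Matrix ιZ ιZ ℂ)) * U) *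
          (∑ k, Δ k ⊗ₖ Λ k) =
        (∑ k, Δ k ⊗ₖ Λ k) * (W ⊗ₖ (1 : Matrix ιZ ιZ ℂ)) * (∑ k, Δ k ⊗ₖ Λ k) := by
  classical
  open CausalAux3 in
  set P : Matrix ((ιX × ιY) × ιZ) ((ιX × ιY) × ιZ) ℂ := ∑ k, Δ k ⊗ₖ Λ k with hPdef
  set A : Matrix ((ιX × ιY) × ιZ) ((ιX × ιY) × ιZ) ℂ :=
    Uᴴ * ((X ⊗ₖ (1 : Matrix ιY ιY ℂ)) ⊗ₖ (1 : Matrix ιZ ιZ ℂ)) * U with hAdef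
  have hΔherm : ∀ k, (Δ k)ᴴ = Δ k := fun k => (hΔproj k).1
  have hΔidem : ∀ k, Δ k * Δ k = Δ k := fun k => (hΔproj k).2
  have hΛherm : ∀ k, (Λ k)ᴴ = Λ k := fun k => (hΛproj k).1
  have hΛidem : ∀ k, Λ k * Λ k = Λ k := fun k => (hΛproj k).2
  have hkronherm : ∀ k, (Δ k ⊗ₖ Λ k)ᴴ = Δ k ⊗ₖ Λ k := fun k => by
    rw [kron_conjTranspose, hΔherm, hΛherm]
  have hPherm : Pᴴ = P := by
    rw [hPdef, Matrix.conjTranspose_sum]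
    exact Finset.sum_congr rfl fun k _ => hkronherm k
  have hPP : P * P = P := by
    rw [hPdef, Finset.sum_mul_sum]
    refine Finset.sum_congr rfl fun j _ => ?_
    rw [Finset.sum_eq_single j]
    · rw [← Matrix.mul_kronecker_mul, hΔidem j, hΛidem j]
    · intro k _ hk
      rw [← Matrix.mul_kronecker_mul, hΛorth j k (Ne.symm hk), Matrix.kronecker_zero]
    · intro h; exact absurd (Finset.mem_univ j) h
  have hPmulKron : ∀ (k : Fin n) (S : Matrix (ιX × ιY) (ιX × ιY) ℂ), Δ k * S = S →
      P * (S ⊗ₖ Λ k) = S ⊗ₖ Λ k := by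
    intro k S hS
    rw [hPdef, Finset.sum_mul, Finset.sum_eq_single k]
    · rw [← Matrix.mul_kronecker_mul, hS, hΛidem k]
    · intro j _ hj
      rw [← Matrix.mul_kronecker_mul, hΛorth j k hj, Matrix.kronecker_zero]
    · intro h; exact absurd (Finset.mem_univ k) h
  -- the positive real traces of the Λ k
  set r : Fin n → ℝ := fun k => ∑ i, ∑ j, Complex.normSq (Λ k i j) with hrdef
  have hr_nonneg : ∀ k, 0 ≤ r k := fun k =>
    Finset.sum_nonneg fun i _ => Finset.sum_nonneg fun j _ => Complex.normSq_nonneg _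
  have htraceΛ : ∀ k, trace (Λ k) = ((r k : ℝ) : ℂ) := by
    intro k
    have h1 : trace (Λ k) = trace ((Λ k)ᴴ * Λ k) := by
      rw [hΛherm k, hΛidem k]
    rw [h1, Matrix.trace]
    simp only [Matrix.diag_apply, Matrix.mul_apply, Matrix.conjTranspose_apply, hrdef]
    push_cast
    rw [Finset.sum_comm]
    refine Finset.sum_congr rfl fun i _ => Finset.sum_congr rfl fun j _ => ?_
    rw [Complex.star_def, ← Complex.normSq_eq_conj_mul_self]
  have hr_ne : ∀ k, r k ≠ 0 := by
    intro k hk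
    apply hΛne k
    ext i j
    have h0 : ∀ i' ∈ (Finset.univ : Finset ιZ), (∑ j', Complex.normSq (Λ k i' j')) = 0 := by
      intro i' _
      have := (Finset.sum_eq_zero_iff_of_nonneg fun i'' _ =>
        Finset.sum_nonneg fun j'' _ => Complex.normSq_nonneg _).mp hk
      exact this i' (Finset.mem_univ i')
    have h1 := (Finset.sum_eq_zero_iff_of_nonneg fun j' _ =>
      Complex.normSq_nonneg _).mp (h0 i (Finset.mem_univ i)) j (Finset.mem_univ j)
    simpa using Complex.normSq_eq_zero.mp h1
  -- the candidate W
  set c : Fin n → ℂ := fun k => (((r k)⁻¹ : ℝ) : ℂ) with hcdef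
  have hc_mul : ∀ k, c k * ((r k : ℝ) : ℂ) = 1 := by
    intro k
    rw [hcdef, ← Complex.ofReal_mul, inv_mul_cancel₀ (hr_ne k), Complex.ofReal_one]
  set E : Fin n → Matrix (ιX × ιY) (ιX × ιY) ℂ := fun k => Δ k * Fm A (Λ k) * Δ k with hEdef
  set W : Matrix (ιX × ιY) (ιX × ιY) ℂ := ∑ k, c k • E k with hWdef
  refine ⟨W, ?_⟩
  clear_value P A r c E W
  have hsum_kron : ∀ {κ : Type} (s : Finset κ) (f : κ → Matrix (ιX × ιY) (ιX × ιY) ℂ)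
      (B : Matrix ιZ ιZ ℂ), (∑ i ∈ s, f i) ⊗ₖ B = ∑ i ∈ s, f i ⊗ₖ B := by
    intro κ s f B
    ext ⟨u, p⟩ ⟨u', p'⟩
    simp [Matrix.kroneckerMap_apply, Matrix.sum_apply, Finset.sum_mul]
  have hEk_left : ∀ k, Δ k * E k = E k := by
    intro k
    simp only [hEdef, ← Matrix.mul_assoc, hΔidem k]
  have hEk_right : ∀ k, E k * Δ k = E k := by
    intro k
    simp only [hEdef, Matrix.mul_assoc, hΔidem k]
  have hEkP : ∀ k, (E k ⊗ₖ (1 : Matrix ιZ ιZ ℂ)) * P = E k ⊗ₖ Λ k := by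
    intro k
    rw [hPdef, Finset.mul_sum, Finset.sum_eq_single k]
    · rw [← Matrix.mul_kronecker_mul, hEk_right k, Matrix.one_mul]
    · intro j _ hj
      rw [← Matrix.mul_kronecker_mul]
      have : E k * Δ j = 0 := by
        simp only [hEdef, Matrix.mul_assoc, hΔorth k j (Ne.symm hj), Matrix.mul_zero]
      rw [this, Matrix.zero_kronecker]
    · intro h; exact absurd (Finset.mem_univ k) h
  have hPWP : P * (W ⊗ₖ (1 : Matrix ιZ ιZ ℂ)) * P = ∑ k, c k • (E k ⊗ₖ Λ k) := by
    rw [hWdef, hsum_kron, Finset.mul_sum, Finset.sum_mul]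
    refine Finset.sum_congr rfl fun k _ => ?_
    rw [Matrix.smul_kronecker, Matrix.mul_smul, Matrix.smul_mul, Matrix.mul_assoc,
      hEkP k, hPmulKron k (E k) (hEk_left k)]
  -- reduce to a quadratic-form statement
  rw [← sub_eq_zero]
  have hD : P * A * P - P * (W ⊗ₖ (1 : Matrix ιZ ιZ ℂ)) * P
      = P * (A - W ⊗ₖ (1 : Matrix ιZ ιZ ℂ)) * P := by noncomm_ring
  rw [hD]
  have main : ∀ x : ((ιX × ιY) × ιZ) → ℂ,
      star (P *ᵥ x) ⬝ᵥ (A *ᵥ (P *ᵥ x)) =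
        star (P *ᵥ x) ⬝ᵥ ((W ⊗ₖ (1 : Matrix ιZ ιZ ℂ)) *ᵥ (P *ᵥ x)) := by
    intro x
    set w : ((ιX × ιY) × ιZ) → ℂ := P *ᵥ x with hwdef
    by_cases hw : w = 0
    · rw [hw]
      simp
    · set t : ℝ := ∑ i, Complex.normSq (w i) with htdef
      have ht_nonneg : 0 ≤ t := Finset.sum_nonneg fun i _ => Complex.normSq_nonneg _
      have ht_ne : t ≠ 0 := by
        intro h0
        apply hw
        rw [htdef] at h0
        funext i
        have h1 := (Finset.sum_eq_zero_iff_of_nonneg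
          fun i _ => Complex.normSq_nonneg _).mp h0 i (Finset.mem_univ i)
        simpa using Complex.normSq_eq_zero.mp h1
      have hPw : P *ᵥ w = w := by
        rw [hwdef, Matrix.mulVec_mulVec, hPP]
      set ρ : Matrix ((ιX × ιY) × ιZ) ((ιX × ιY) × ιZ) ℂ :=
        ((t⁻¹ : ℝ) : ℂ) • vecMulVec w (star w) with hρdef
      have hρpsd : ρ.PosSemidef :=
        posSemidef_ofReal_smul (inv_nonneg.mpr ht_nonneg) (posSemidef_vecMulVec w)
      have hvv_trace : trace (vecMulVec w (star w)) = ((t : ℝ) : ℂ) := by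
        rw [Matrix.trace, htdef]
        push_cast
        refine Finset.sum_congr rfl fun i _ => ?_
        simp only [Matrix.diag_apply, vecMulVec_apply, Pi.star_apply, Complex.star_def]
        exact Complex.mul_conj (w i)
      have hρtr : ρ.trace = 1 := by
        rw [hρdef, Matrix.trace_smul, hvv_trace, smul_eq_mul, ← Complex.ofReal_mul,
          inv_mul_cancel₀ ht_ne, Complex.ofReal_one]
      have hρL : P * ρ = ρ := by
        rw [hρdef, Matrix.mul_smul, CausalAux3.mul_vecMulVec, hPw]
      have hρR : ρ * P = ρ := by
        have h := congrArg Matrix.conjTranspose hρL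
        rw [Matrix.conjTranspose_mul, hρpsd.1.eq, hPherm] at h
        exact h
      have hρPP : P * ρ * P = ρ := by rw [hρL, hρR]
      have hρrange : LinearMap.range ρ.mulVecLin ≤ LinearMap.range P.mulVecLin := by
        rw [← hρL, Matrix.mulVecLin_mul]
        exact LinearMap.range_comp_le_range _ _
      -- the comparison state σ
      set S : Fin n → Matrix (ιX × ιY) (ιX × ιY) ℂ :=
        fun k => ptraceZ3 ((Δ k ⊗ₖ Λ k) * ρ * (Δ k ⊗ₖ Λ k)) with hSdef
      have hSk : ∀ k, S k = Δ k * Fm ρ (Λ k) * Δ k := by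
        intro k
        simp only [hSdef]
        rw [ptraceZ3_sandwich, hΛidem k]
      have hSleft : ∀ k, Δ k * S k = S k := by
        intro k
        rw [hSk k]
        simp only [← Matrix.mul_assoc, hΔidem k]
      set σ : Matrix ((ιX × ιY) × ιZ) ((ιX × ιY) × ιZ) ℂ :=
        ∑ k, c k • (S k ⊗ₖ Λ k) with hσdef
      have hΛpsd : ∀ k, (Λ k).PosSemidef := by
        intro k
        have h : (Λ k)ᴴ * Λ k = Λ k := by rw [hΛherm k, hΛidem k]
        exact h ▸ Matrix.posSemidef_conjTranspose_mul_self (Λ k)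
      have hSpsd : ∀ k, (S k).PosSemidef := by
        intro k
        have h := hρpsd.mul_mul_conjTranspose_same (Δ k ⊗ₖ Λ k)
        rw [hkronherm k] at h
        simp only [hSdef]
        exact posSemidef_ptraceZ3 h
      have hσpsd : σ.PosSemidef := by
        rw [hσdef]
        refine posSemidef_sum _ _ fun k _ => ?_
        simp only [hcdef]
        exact posSemidef_ofReal_smul (inv_nonneg.mpr (hr_nonneg k))
          (posSemidef_kron (hSpsd k) (hΛpsd k))
      have hPk2 : ∀ k : Fin n, (Δ k ⊗ₖ Λ k) * (Δ k ⊗ₖ Λ k) = Δ k ⊗ₖ Λ k := by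
        intro k
        rw [← Matrix.mul_kronecker_mul, hΔidem k, hΛidem k]
      have htraceS : ∀ k, trace (S k) = trace ((Δ k ⊗ₖ Λ k) * ρ) := by
        intro k
        simp only [hSdef]
        rw [trace_ptraceZ3, Matrix.trace_mul_cycle, hPk2 k]
      have hσtr : σ.trace = 1 := by
        rw [hσdef, Matrix.trace_sum]
        have hterm : ∀ k : Fin n, trace (c k • (S k ⊗ₖ Λ k)) = trace ((Δ k ⊗ₖ Λ k) * ρ) := by
          intro k
          rw [Matrix.trace_smul, Matrix.trace_kronecker, htraceS k, htraceΛ k, smul_eq_mul]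
          calc c k * (trace ((Δ k ⊗ₖ Λ k) * ρ) * ((r k : ℝ) : ℂ))
              = (c k * ((r k : ℝ) : ℂ)) * trace ((Δ k ⊗ₖ Λ k) * ρ) := by ring
            _ = trace ((Δ k ⊗ₖ Λ k) * ρ) := by rw [hc_mul k, one_mul]
        rw [Finset.sum_congr rfl fun k _ => hterm k, ← Matrix.trace_sum, ← Finset.sum_mul,
          ← hPdef, hρL, hρtr]
      have hσsuppL : P * σ = σ := by
        rw [hσdef, Finset.mul_sum]
        refine Finset.sum_congr rfl fun k _ => ?_
        rw [Matrix.mul_smul, hPmulKron k (S k) (hSleft k)]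
      have hσrange : LinearMap.range σ.mulVecLin ≤ LinearMap.range P.mulVecLin := by
        rw [← hσsuppL, Matrix.mulVecLin_mul]
        exact LinearMap.range_comp_le_range _ _
      -- equality of partial traces over Z
      have hptr : ptraceZ3 ρ = ptraceZ3 σ := by
        have hR : ptraceZ3 σ = ∑ k, S k := by
          rw [hσdef, ptraceZ3_sum]
          refine Finset.sum_congr rfl fun k _ => ?_
          rw [ptraceZ3_smul, ptraceZ3_kron, htraceΛ k, smul_smul, hc_mul k, one_smul]
        have hexp : P * ρ * P = ∑ k, ∑ j, (Δ j ⊗ₖ Λ j) * ρ * (Δ k ⊗ₖ Λ k) := by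
          rw [hPdef, Finset.mul_sum]
          refine Finset.sum_congr rfl fun k _ => ?_
          rw [Finset.sum_mul, Finset.sum_mul]
        have hterm : ∀ k : Fin n,
            ptraceZ3 (∑ j, (Δ j ⊗ₖ Λ j) * ρ * (Δ k ⊗ₖ Λ k)) = S k := by
          intro k
          rw [ptraceZ3_sum, Finset.sum_eq_single k]
          · intro j _ hj
            rw [ptraceZ3_sandwich, hΛorth k j (Ne.symm hj), Fm_zero, Matrix.mul_zero,
              Matrix.zero_mul]
          · intro h; exact absurd (Finset.mem_univ k) h
        rw [← hρPP, hexp, ptraceZ3_sum, Finset.sum_congr rfl fun k _ => hterm k, hR]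
      -- apply causality
      have hcausal := hUcausal ρ σ hρpsd hρtr hρrange hσpsd hσtr hσrange hptr
      have hAtrace : ∀ τ : Matrix ((ιX × ιY) × ιZ) ((ιX × ιY) × ιZ) ℂ,
          trace (A * τ) = trace (X * ptraceYZ3 (U * τ * Uᴴ)) := by
        intro τ
        rw [hAdef,
          show Uᴴ * ((X ⊗ₖ (1 : Matrix ιY ιY ℂ)) ⊗ₖ (1 : Matrix ιZ ιZ ℂ)) * U * τ
            = Uᴴ * (((X ⊗ₖ (1 : Matrix ιY ιY ℂ)) ⊗ₖ (1 : Matrix ιZ ιZ ℂ)) * U * τ)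
            by noncomm_ring,
          Matrix.trace_mul_comm,
          show (X ⊗ₖ (1 : Matrix ιY ιY ℂ)) ⊗ₖ (1 : Matrix ιZ ιZ ℂ) * U * τ * Uᴴ
            = ((X ⊗ₖ (1 : Matrix ιY ιY ℂ)) ⊗ₖ (1 : Matrix ιZ ιZ ℂ)) * (U * τ * Uᴴ)
            by noncomm_ring,
          trace_kron_one_one_mul]
      have htrρσ : trace (A * ρ) = trace (A * σ) := by
        rw [hAtrace ρ, hAtrace σ, hcausal]
      have hEk : ∀ k, E k = Δ k * Fm A (Λ k) * Δ k := fun k => by simp only [hEdef]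
      have hLHS : trace (A * σ) = ∑ k, c k * trace (E k * Fm ρ (Λ k)) := by
        rw [hσdef, Finset.mul_sum, Matrix.trace_sum]
        refine Finset.sum_congr rfl fun k _ => ?_
        rw [Matrix.mul_smul, Matrix.trace_smul, smul_eq_mul, trace_mul_kron]
        congr 1
        rw [hSk k,
          show Fm A (Λ k) * (Δ k * Fm ρ (Λ k) * Δ k)
            = (Fm A (Λ k) * Δ k * Fm ρ (Λ k)) * Δ k by noncomm_ring,
          Matrix.trace_mul_comm,
          show Δ k * (Fm A (Λ k) * Δ k * Fm ρ (Λ k))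
            = (Δ k * Fm A (Λ k) * Δ k) * Fm ρ (Λ k) by noncomm_ring, ← hEk k]
      have hRHS : trace ((W ⊗ₖ (1 : Matrix ιZ ιZ ℂ)) * ρ)
          = ∑ k, c k * trace (E k * Fm ρ (Λ k)) := by
        conv_lhs => rw [← hρPP]
        rw [show (W ⊗ₖ (1 : Matrix ιZ ιZ ℂ)) * (P * ρ * P)
            = ((W ⊗ₖ (1 : Matrix ιZ ιZ ℂ)) * P * ρ) * P by noncomm_ring,
          Matrix.trace_mul_comm,
          show P * ((W ⊗ₖ (1 : Matrix ιZ ιZ ℂ)) * P * ρ)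
            = (P * (W ⊗ₖ (1 : Matrix ιZ ιZ ℂ)) * P) * ρ by noncomm_ring,
          hPWP, Finset.sum_mul, Matrix.trace_sum]
        refine Finset.sum_congr rfl fun k _ => ?_
        rw [Matrix.smul_mul, Matrix.trace_smul, smul_eq_mul]
        congr 1
        rw [Matrix.trace_mul_comm, trace_mul_kron, Matrix.trace_mul_comm]
      have hfin : trace (A * ρ) = trace ((W ⊗ₖ (1 : Matrix ιZ ιZ ℂ)) * ρ) := by
        rw [htrρσ, hLHS, hRHS]
      have hexpand : ∀ M : Matrix ((ιX × ιY) × ιZ) ((ιX × ιY) × ιZ) ℂ,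
          trace (M * ρ) = ((t⁻¹ : ℝ) : ℂ) * (star w ⬝ᵥ M *ᵥ w) := by
        intro M
        rw [hρdef, Matrix.mul_smul, Matrix.trace_smul, smul_eq_mul, trace_mul_vecMulVec]
      rw [hexpand A, hexpand (W ⊗ₖ (1 : Matrix ιZ ιZ ℂ))] at hfin
      exact mul_left_cancel₀ (Complex.ofReal_ne_zero.mpr (inv_ne_zero ht_ne)) hfin
  apply eq_zero_of_quadratic
  intro x
  have h1 : (P * (A - W ⊗ₖ (1 : Matrix ιZ ιZ ℂ)) * P) *ᵥ x
      = P *ᵥ ((A - W ⊗ₖ (1 : Matrix ιZ ιZ ℂ)) *ᵥ (P *ᵥ x)) := by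
    rw [Matrix.mulVec_mulVec, Matrix.mulVec_mulVec]
  have h2 : ∀ u, star x ⬝ᵥ (P *ᵥ u) = star (P *ᵥ x) ⬝ᵥ u := by
    intro u
    rw [Matrix.dotProduct_mulVec, Matrix.star_mulVec, hPherm]
  rw [h1, h2, Matrix.sub_mulVec, dotProduct_sub, main x, sub_self]
end

section
/- Let 𝒳, 𝒴, 𝒵 be finite-dimensional complex Hilbert spaces, let {Δ_1,…,Δ_n} be an orthogonal set of nonzero projection operators on 𝒳⊗𝒴, let {Λ_1,…,Λ_n} be an orthogonal set of nonzero projection operators on 𝒵, let Π = Σ_{k=1}^n Δ_k⊗Λ_k, and let U be a unitary operator on 𝒳⊗𝒴⊗𝒵 that is 𝒴→𝒳 causal on im(Π). If X is a unitary operator on 𝒳 such that U*(X⊗1_{𝒴⊗𝒵})U commutes with Π, then there exists a unitary operator W on 𝒳⊗𝒴 such that Π U*(X⊗1_{𝒴⊗𝒵})U Π = Π(W⊗1_𝒵)Π. -/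
set_option linter.unusedSectionVars false
set_option maxHeartbeats 1000000


open Matrix
open scoped Kronecker ComplexOrder

lemma kron_conjTranspose {m p : Type*} (A : Matrix m m ℂ) (B : Matrix p p ℂ) :
    (A ⊗ₖ B)ᴴ = Aᴴ ⊗ₖ Bᴴ := by
  ext ⟨i, j⟩ ⟨k, l⟩
  simp [Matrix.conjTranspose_apply, mul_comm]


/-- generic partial trace over second factor -/
noncomputable def ptrace2 {α β : Type*} [Fintype β]
    (M : Matrix (α × β) (α × β) ℂ) : Matrix α α ℂ :=
  Matrix.of fun w w' => ∑ z, M (w, z) (w', z)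

section tr
variable {α β : Type*} [Fintype α] [Fintype β] [DecidableEq α] [DecidableEq β]

lemma ptrace2_add (M N : Matrix (α × β) (α × β) ℂ) :
    ptrace2 (M + N) = ptrace2 M + ptrace2 N := by
  ext w w'; simp [ptrace2, Finset.sum_add_distrib]

lemma ptrace2_smul (c : ℂ) (M : Matrix (α × β) (α × β) ℂ) :
    ptrace2 (c • M) = c • ptrace2 M := by
  ext w w'; simp [ptrace2, Finset.mul_sum]

lemma ptrace2_sub (M N : Matrix (α × β) (α × β) ℂ) :
    ptrace2 (M - N) = ptrace2 M - ptrace2 N := by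
  ext w w'; simp [ptrace2, Finset.sum_sub_distrib]

lemma ptrace2_conjTranspose (M : Matrix (α × β) (α × β) ℂ) :
    ptrace2 Mᴴ = (ptrace2 M)ᴴ := by
  ext w w'; simp [ptrace2, Matrix.conjTranspose_apply]

lemma trace_eq_trace_ptrace2 (M : Matrix (α × β) (α × β) ℂ) :
    M.trace = (ptrace2 M).trace := by
  simp [Matrix.trace, ptrace2, Matrix.diag, ← Finset.univ_product_univ, Finset.sum_product]

lemma trace_mul_kron_one (M : Matrix (α × β) (α × β) ℂ) (R : Matrix α α ℂ) :
    (M * (R ⊗ₖ (1 : Matrix β β ℂ))).trace = (ptrace2 M * R).trace := by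
  simp only [Matrix.trace, Matrix.diag, Matrix.mul_apply, Matrix.kroneckerMap_apply,
    Matrix.one_apply, ptrace2, Matrix.of_apply, Finset.sum_mul,
    Fintype.sum_prod_type, mul_ite, mul_one, mul_zero]
  simp only [Finset.sum_ite_eq', Finset.sum_ite_eq, Finset.mem_univ, if_true]
  refine Finset.sum_congr rfl fun w _ => ?_
  rw [Finset.sum_comm]

end tr

lemma herm_decomp {m : Type*} [Fintype m] [DecidableEq m] {H : Matrix m m ℂ}
    (hH : H.IsHermitian) :
    ∃ (Hp Hn : Matrix m m ℂ) (t s : ℝ),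
      Hp.PosSemidef ∧ Hn.PosSemidef ∧ H = Hp - Hn ∧
      (∃ Q, Hp = H * Q) ∧ (∃ Q, Hn = H * Q) ∧
      Hp.trace = (t : ℂ) ∧ Hn.trace = (s : ℂ) ∧ 0 ≤ t ∧ 0 ≤ s ∧
      (t = 0 → Hp = 0) ∧ (s = 0 → Hn = 0) := by
  set V : Matrix m m ℂ := (hH.eigenvectorUnitary : Matrix m m ℂ) with hVdef
  have hV1 : Vᴴ * V = 1 := by
    simpa [Matrix.star_eq_conjTranspose] using
      (Unitary.star_mul_self_of_mem (hH.eigenvectorUnitary).2)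
  have hV2 : V * Vᴴ = 1 := by
    simpa [Matrix.star_eq_conjTranspose] using
      (Unitary.mul_star_self_of_mem (hH.eigenvectorUnitary).2)
  set D : m → ℝ := hH.eigenvalues with hDdef
  have hspec : H = V * Matrix.diagonal (fun i => (D i : ℂ)) * Vᴴ := by
    exact hH.spectral_theorem
  -- conjugation helper
  have conj_mul : ∀ d e : m → ℂ,
      (V * Matrix.diagonal d * Vᴴ) * (V * Matrix.diagonal e * Vᴴ)
        = V * Matrix.diagonal (fun i => d i * e i) * Vᴴ := by
    intro d e
    calc (V * Matrix.diagonal d * Vᴴ) * (V * Matrix.diagonal e * Vᴴ)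
        = V * Matrix.diagonal d * (Vᴴ * V) * Matrix.diagonal e * Vᴴ := by
          noncomm_ring
      _ = V * (Matrix.diagonal d * Matrix.diagonal e) * Vᴴ := by
          rw [hV1]; noncomm_ring
      _ = _ := by rw [Matrix.diagonal_mul_diagonal]
  have conj_trace : ∀ d : m → ℂ, (V * Matrix.diagonal d * Vᴴ).trace = ∑ i, d i := by
    intro d
    rw [Matrix.trace_mul_cycle, hV1, Matrix.one_mul, Matrix.trace_diagonal]
  have conj_psd : ∀ d : m → ℝ, (∀ i, 0 ≤ d i) →
      (V * Matrix.diagonal (fun i => (d i : ℂ)) * Vᴴ).PosSemidef := by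
    intro d hd
    exact (Matrix.PosSemidef.diagonal (fun i => by
      simpa using Complex.real_le_real.mpr (hd i))).mul_mul_conjTranspose_same V
  refine ⟨V * Matrix.diagonal (fun i => ((max (D i) 0 : ℝ) : ℂ)) * Vᴴ,
      V * Matrix.diagonal (fun i => ((max (-D i) 0 : ℝ) : ℂ)) * Vᴴ,
      ∑ i, max (D i) 0, ∑ i, max (-D i) 0,
      conj_psd _ (fun i => le_max_right _ _),
      conj_psd _ (fun i => le_max_right _ _), ?_, ?_, ?_, ?_, ?_, ?_, ?_, ?_, ?_⟩
  · have hfun : (fun i => ((max (D i) 0 : ℝ) : ℂ) - ((max (-D i) 0 : ℝ) : ℂ))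
        = fun i => (D i : ℂ) := by
      funext i
      simp only [← Complex.ofReal_sub, max_zero_sub_max_neg_zero_eq_self]
    rw [hspec, ← Matrix.sub_mul, ← Matrix.mul_sub, Matrix.diagonal_sub, hfun]
  · refine ⟨V * Matrix.diagonal (fun i => if 0 < D i then 1 else 0) * Vᴴ, ?_⟩
    rw [hspec, conj_mul]
    have hfun : (fun i => ((max (D i) 0 : ℝ) : ℂ))
        = fun i => (D i : ℂ) * (if 0 < D i then 1 else 0) := by
      funext i
      by_cases h : 0 < D i
      · simp [h, max_eq_left h.le]
      · simp [h, max_eq_right (not_lt.mp h)]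
    rw [hfun]
  · refine ⟨V * Matrix.diagonal (fun i => if D i < 0 then -1 else 0) * Vᴴ, ?_⟩
    rw [hspec, conj_mul]
    have hfun : (fun i => ((max (-D i) 0 : ℝ) : ℂ))
        = fun i => (D i : ℂ) * (if D i < 0 then -1 else 0) := by
      funext i
      by_cases h : D i < 0
      · simp only [h, if_true, max_eq_left (neg_nonneg.mpr h.le)]
        push_cast; ring
      · simp [h, max_eq_right (neg_nonpos.mpr (not_lt.mp h))]
    rw [hfun]
  · rw [conj_trace]; push_cast; rfl
  · rw [conj_trace]; push_cast; rfl
  · exact Finset.sum_nonneg fun i _ => le_max_right _ _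
  · exact Finset.sum_nonneg fun i _ => le_max_right _ _
  · intro ht
    have : ∀ i, max (D i) 0 = 0 := by
      intro i
      have := (Finset.sum_eq_zero_iff_of_nonneg (fun i _ => le_max_right (D i) 0)).mp ht
      exact this i (Finset.mem_univ i)
    simp only [this]
    simp
  · intro ht
    have : ∀ i, max (-D i) 0 = 0 := by
      intro i
      have := (Finset.sum_eq_zero_iff_of_nonneg (fun i _ => le_max_right (-D i) 0)).mp ht
      exact this i (Finset.mem_univ i)
    simp only [this]
    simp

lemma posSemidef_smul_real {m : Type*} [Fintype m] {A : Matrix m m ℂ}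
    (hA : A.PosSemidef) {r : ℝ} (hr : 0 ≤ r) : (((r : ℂ)) • A).PosSemidef := by
  constructor
  · have : ((r : ℂ) • A)ᴴ = (starRingEnd ℂ (r : ℂ)) • Aᴴ := Matrix.conjTranspose_smul _ _
    rw [Matrix.IsHermitian, this, Complex.conj_ofReal, hA.isHermitian.eq]
  · intro x
    have h1 : (0 : ℂ) ≤ (r : ℂ) := by exact_mod_cast Complex.real_le_real.mpr hr
    have h2 := hA.2 x
    calc (0:ℂ) ≤ (r : ℂ) * (x.sum fun i xi => x.sum fun j xj => star xi * A i j * xj) :=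
          mul_nonneg h1 h2
      _ = _ := by
          simp only [Finsupp.sum, Finset.mul_sum, Matrix.smul_apply, smul_eq_mul]
          exact Finset.sum_congr rfl fun i _ => Finset.sum_congr rfl fun j _ => by ring

section causal
variable {ιX ιY ιZ : Type*} [Fintype ιX] [Fintype ιY] [Fintype ιZ]
    [DecidableEq ιX] [DecidableEq ιY] [DecidableEq ιZ]

lemma ptraceZ3_eq (M : Matrix ((ιX × ιY) × ιZ) ((ιX × ιY) × ιZ) ℂ) :
    ptraceZ3 M = ptrace2 M := rfl

lemma ptraceYZ3_eq (M : Matrix ((ιX × ιY) × ιZ) ((ιX × ιY) × ιZ) ℂ) :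
    ptraceYZ3 M = ptrace2 (ptrace2 M) := rfl

lemma causal_lin (U P M : Matrix ((ιX × ιY) × ιZ) ((ιX × ιY) × ιZ) ℂ)
    (hc : IsCausalOn U (LinearMap.range P.mulVecLin))
    (hP : Pᴴ = P)
    (hM : P * M * P = M) (hTr : ptraceZ3 M = 0) :
    ptraceYZ3 (U * M * Uᴴ) = 0 := by
  have key : ∀ H : Matrix ((ιX × ιY) × ιZ) ((ιX × ιY) × ιZ) ℂ, H.IsHermitian →
      P * H * P = H → ptraceZ3 H = 0 → ptraceYZ3 (U * H * Uᴴ) = 0 := by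
    intro H hHerm hHP hHtr
    obtain ⟨Hp, Hn, t, s, hPp, hPn, hHsub, ⟨Qp, hQp⟩, ⟨Qn, hQn⟩, htrp, htrn, ht0, hs0,
      htz, hsz⟩ := herm_decomp hHerm
    have hHtrace : H.trace = 0 := by
      rw [ptraceZ3_eq] at hHtr
      rw [trace_eq_trace_ptrace2, hHtr, Matrix.trace_zero]
    have hts : (t : ℂ) = (s : ℂ) := by
      have : Hp.trace - Hn.trace = H.trace := by rw [hHsub, Matrix.trace_sub]
      rw [htrp, htrn, hHtrace] at this
      linear_combination this
    have htseq : t = s := by exact_mod_cast hts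
    by_cases ht : t = 0
    · have h1 : Hp = 0 := htz ht
      have h2 : Hn = 0 := hsz (htseq ▸ ht)
      have : H = 0 := by rw [hHsub, h1, h2, sub_zero]
      rw [this]
      ext x x'
      simp [ptraceYZ3, Matrix.mul_apply]
    · have htpos : 0 < t := lt_of_le_of_ne ht0 (Ne.symm ht)
      set c : ℂ := ((t⁻¹ : ℝ) : ℂ) with hc_def
      have hcne : c ≠ 0 := by
        simp [hc_def]
        exact ht
      have hrange : ∀ N : Matrix ((ιX × ιY) × ιZ) ((ιX × ιY) × ιZ) ℂ, (∃ Q, N = H * Q) →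
          LinearMap.range (c • N).mulVecLin ≤ LinearMap.range P.mulVecLin := by
        rintro N ⟨Q, rfl⟩
        have hfac : c • (H * Q) = P * (c • (H * P * Q)) := by
          rw [Matrix.mul_smul]
          congr 1
          conv_lhs => rw [← hHP]
          noncomm_ring
        rw [hfac, Matrix.mulVecLin_mul]
        exact LinearMap.range_comp_le_range _ _
      have hptr : ptrace2 Hp = ptrace2 Hn := by
        have : ptrace2 (Hp - Hn) = 0 := by rw [← hHsub, ← ptraceZ3_eq, hHtr]
        rw [ptrace2_sub] at this
        exact sub_eq_zero.mp this
      have happ := hc (c • Hp) (c • Hn)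
        (posSemidef_smul_real hPp (inv_nonneg.mpr ht0))
        (by rw [Matrix.trace_smul, htrp, smul_eq_mul, hc_def, ← Complex.ofReal_mul,
              inv_mul_cancel₀ ht, Complex.ofReal_one])
        (hrange Hp ⟨Qp, hQp⟩)
        (posSemidef_smul_real hPn (inv_nonneg.mpr ht0))
        (by rw [Matrix.trace_smul, htrn, smul_eq_mul, hc_def, htseq, ← Complex.ofReal_mul,
              inv_mul_cancel₀ (htseq ▸ ht), Complex.ofReal_one])
        (hrange Hn ⟨Qn, hQn⟩)
        (by rw [ptraceZ3_eq, ptraceZ3_eq, ptrace2_smul, ptrace2_smul, hptr])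
      have hconj : ∀ N : Matrix ((ιX × ιY) × ιZ) ((ιX × ιY) × ιZ) ℂ,
          U * (c • N) * Uᴴ = c • (U * N * Uᴴ) := by
        intro N
        rw [Matrix.mul_smul, Matrix.smul_mul]
      rw [hconj, hconj, ptraceYZ3_eq, ptraceYZ3_eq, ptrace2_smul, ptrace2_smul,
        ptrace2_smul, ptrace2_smul] at happ
      have heq : ptrace2 (ptrace2 (U * Hp * Uᴴ)) = ptrace2 (ptrace2 (U * Hn * Uᴴ)) := by
        have h' := congrArg (fun N => c⁻¹ • N) happ
        simpa [smul_smul, inv_mul_cancel₀ hcne] using h'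
      have : U * H * Uᴴ = U * Hp * Uᴴ - U * Hn * Uᴴ := by
        rw [hHsub]; noncomm_ring
      rw [this, ptraceYZ3_eq, ptrace2_sub, ptrace2_sub, heq, sub_self]
  -- reduce general M to Hermitian case
  set H1 : Matrix ((ιX × ιY) × ιZ) ((ιX × ιY) × ιZ) ℂ := (2⁻¹ : ℂ) • (M + Mᴴ) with hH1def
  set H2 : Matrix ((ιX × ιY) × ιZ) ((ιX × ιY) × ιZ) ℂ :=
    (-(Complex.I)/2) • (M - Mᴴ) with hH2def
  have hMconj : P * Mᴴ * P = Mᴴ := by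
    have h := congrArg Matrix.conjTranspose hM
    rw [Matrix.conjTranspose_mul, Matrix.conjTranspose_mul, hP, ← Matrix.mul_assoc] at h
    exact h
  have hH1herm : H1.IsHermitian := by
    rw [Matrix.IsHermitian, hH1def, Matrix.conjTranspose_smul, Matrix.conjTranspose_add,
      Matrix.conjTranspose_conjTranspose]
    rw [show (star (2⁻¹ : ℂ)) = (2⁻¹ : ℂ) by simp]
    rw [add_comm]
  have hH2herm : H2.IsHermitian := by
    rw [Matrix.IsHermitian, hH2def, Matrix.conjTranspose_smul, Matrix.conjTranspose_sub,
      Matrix.conjTranspose_conjTranspose]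
    rw [show (star (-(Complex.I)/2) : ℂ) = -(-(Complex.I)/2) by simp; ring]
    rw [neg_smul, ← smul_neg, neg_sub]
  have hH1P : P * H1 * P = H1 := by
    rw [hH1def, Matrix.mul_smul, Matrix.smul_mul, Matrix.mul_add, Matrix.add_mul, hM, hMconj]
  have hH2P : P * H2 * P = H2 := by
    rw [hH2def, Matrix.mul_smul, Matrix.smul_mul, Matrix.mul_sub, Matrix.sub_mul, hM, hMconj]
  have hH1tr : ptraceZ3 H1 = 0 := by
    rw [ptraceZ3_eq] at hTr ⊢
    rw [hH1def, ptrace2_smul, ptrace2_add, ptrace2_conjTranspose, hTr]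
    simp
  have hH2tr : ptraceZ3 H2 = 0 := by
    rw [ptraceZ3_eq] at hTr ⊢
    rw [hH2def, ptrace2_smul, ptrace2_sub, ptrace2_conjTranspose, hTr]
    simp
  have hMdecomp : M = H1 + Complex.I • H2 := by
    rw [hH1def, hH2def, smul_smul]
    rw [show Complex.I * (-(Complex.I)/2) = 2⁻¹ by
      rw [mul_div_assoc', mul_neg, Complex.I_mul_I, neg_neg]; norm_num]
    rw [← smul_add, show M + Mᴴ + (M - Mᴴ) = (2 : ℂ) • M by rw [two_smul]; abel,
      smul_smul]
    norm_num
  have h1 := key H1 hH1herm hH1P hH1tr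
  have h2 := key H2 hH2herm hH2P hH2tr
  have : U * M * Uᴴ = U * H1 * Uᴴ + Complex.I • (U * H2 * Uᴴ) := by
    conv_lhs => rw [hMdecomp]
    rw [Matrix.mul_add, Matrix.add_mul, Matrix.mul_smul, Matrix.smul_mul,
      Matrix.mul_smul, Matrix.smul_mul]
  rw [this, ptraceYZ3_eq] at *
  rw [ptrace2_add, ptrace2_add, ptrace2_smul, ptrace2_smul, h1, h2]
  simp

end causal

noncomputable def matEuclid (γ : Type*) [Fintype γ] :
    Matrix γ γ ℂ ≃ₗ[ℂ] EuclideanSpace ℂ (γ × γ) :=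
  (LinearEquiv.curry ℂ ℂ γ γ).symm ≪≫ₗ (WithLp.linearEquiv 2 ℂ ((γ × γ) → ℂ)).symm

lemma inner_matEuclid {γ : Type*} [Fintype γ] (M N : Matrix γ γ ℂ) :
    (inner ℂ (matEuclid γ M) (matEuclid γ N) : ℂ) = (Mᴴ * N).trace := by
  simp only [PiLp.inner_apply, RCLike.inner_apply, Matrix.trace, Matrix.diag,
    Matrix.mul_apply, Matrix.conjTranspose_apply, matEuclid]
  rw [← Finset.univ_product_univ, Finset.sum_product]
  rw [Finset.sum_comm]
  refine Finset.sum_congr rfl fun i _ => Finset.sum_congr rfl fun j _ => ?_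
  rw [mul_comm]
  rfl

lemma trace_mul_all_zero {γ : Type*} [Fintype γ] [DecidableEq γ] (S : Matrix γ γ ℂ)
    (h : ∀ R : Matrix γ γ ℂ, (S * R).trace = 0) : S = 0 := by
  ext i j
  have := h (Matrix.single j i 1)
  simp only [Matrix.trace, Matrix.diag, Matrix.mul_apply, Matrix.single,
    Matrix.of_apply, mul_ite, mul_one, mul_zero, ite_and] at this
  simpa [Finset.sum_ite_eq, Finset.sum_ite_eq'] using this

lemma mem_range_of_orth {γ δ : Type*} [Fintype γ] [Fintype δ]
    (f : Matrix δ δ ℂ →ₗ[ℂ] Matrix γ γ ℂ) (A : Matrix γ γ ℂ)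
    (h : ∀ N : Matrix γ γ ℂ, (∀ R, ((f R)ᴴ * N).trace = 0) → (Nᴴ * A).trace = 0) :
    A ∈ LinearMap.range f := by
  set e := matEuclid γ
  set K : Submodule ℂ (EuclideanSpace ℂ (γ × γ)) :=
    (LinearMap.range f).map (e : Matrix γ γ ℂ →ₗ[ℂ] EuclideanSpace ℂ (γ × γ)) with hK
  have hKK : Kᗮᗮ = K := Submodule.orthogonal_orthogonal K
  have hmem : e A ∈ Kᗮᗮ := by
    rw [Submodule.mem_orthogonal]
    intro u hu
    have hN : ∀ R, ((f R)ᴴ * (e.symm u)).trace = 0 := by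
      intro R
      have : e (f R) ∈ K := ⟨f R, ⟨R, rfl⟩, rfl⟩
      have h0 := (Submodule.mem_orthogonal K u).mp hu _ this
      rw [← h0, ← inner_matEuclid (f R) (e.symm u), e.apply_symm_apply]
    have := h (e.symm u) hN
    rw [← inner_matEuclid (e.symm u) A, e.apply_symm_apply] at this
    exact this
  rw [hKK] at hmem
  obtain ⟨B, hB, hBe⟩ := hmem
  obtain ⟨R, rfl⟩ := hB
  exact ⟨R, e.injective hBe⟩

section fam
variable {α β : Type*} [Fintype α] [Fintype β] [DecidableEq α] [DecidableEq β]

lemma kron_eq_cancel {A B : Matrix α α ℂ} {C : Matrix β β ℂ}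
    (h : A ⊗ₖ C = B ⊗ₖ C) (hC : C ≠ 0) : A = B := by
  obtain ⟨z, w, hzw⟩ : ∃ z w, C z w ≠ 0 := by
    by_contra hc; push_neg at hc; exact hC (by ext z w; simp [hc])
  ext i j
  have := congrFun (congrFun h (i, z)) (j, w)
  simp only [Matrix.kroneckerMap_apply] at this
  exact mul_right_cancel₀ hzw this

variable {n : ℕ}

lemma sum_kron_mul_kron (B : Fin n → Matrix α α ℂ) (E : Fin n → Matrix β β ℂ)
    (R : Matrix α α ℂ) (T : Matrix β β ℂ) :
    (∑ k, B k ⊗ₖ E k) * (R ⊗ₖ T) = ∑ k, (B k * R) ⊗ₖ (E k * T) := by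
  rw [Finset.sum_mul]
  exact Finset.sum_congr rfl fun k _ => (Matrix.mul_kronecker_mul _ _ _ _).symm

lemma kron_mul_sum_kron (B : Fin n → Matrix α α ℂ) (E : Fin n → Matrix β β ℂ)
    (R : Matrix α α ℂ) (T : Matrix β β ℂ) :
    (R ⊗ₖ T) * (∑ k, B k ⊗ₖ E k) = ∑ k, (R * B k) ⊗ₖ (T * E k) := by
  rw [Finset.mul_sum]
  exact Finset.sum_congr rfl fun k _ => (Matrix.mul_kronecker_mul _ _ _ _).symm

lemma sum_kron_mul_sum_kron (B D : Fin n → Matrix α α ℂ) (E F : Fin n → Matrix β β ℂ)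
    (hEF : ∀ j k, j ≠ k → E j * F k = 0) :
    (∑ j, B j ⊗ₖ E j) * (∑ k, D k ⊗ₖ F k) = ∑ k, (B k * D k) ⊗ₖ (E k * F k) := by
  rw [Finset.sum_mul]
  rw [show (∑ j, (B j ⊗ₖ E j) * ∑ k, D k ⊗ₖ F k)
      = ∑ j, ∑ k, (B j * D k) ⊗ₖ (E j * F k) from
    Finset.sum_congr rfl fun j _ => kron_mul_sum_kron _ _ _ _]
  refine Finset.sum_congr rfl fun j _ => ?_
  refine Finset.sum_eq_single j (fun k _ hkj => ?_) (by simp)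
  rw [hEF j k (Ne.symm hkj), Matrix.kronecker_zero]

lemma kron_sum_ext {Λ : Fin n → Matrix β β ℂ}
    (hΛidem : ∀ k, Λ k * Λ k = Λ k) (hΛne : ∀ k, Λ k ≠ 0)
    (hΛorth : ∀ j k, j ≠ k → Λ j * Λ k = 0) (B D : Fin n → Matrix α α ℂ)
    (h : ∑ k, B k ⊗ₖ Λ k = ∑ k, D k ⊗ₖ Λ k) : ∀ j, B j = D j := by
  intro j
  have h2 := congrArg (· * ((1 : Matrix α α ℂ) ⊗ₖ Λ j)) h
  simp only [sum_kron_mul_kron, Matrix.mul_one] at h2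
  have hside : ∀ B' : Fin n → Matrix α α ℂ,
      (∑ k, B' k ⊗ₖ (Λ k * Λ j)) = B' j ⊗ₖ Λ j := by
    intro B'
    refine Eq.trans (Finset.sum_eq_single j (fun k _ hkj => ?_) (by simp)) ?_
    · rw [hΛorth k j hkj, Matrix.kronecker_zero]
    · rw [hΛidem j]
  rw [hside B, hside D] at h2
  exact kron_eq_cancel h2 (hΛne j)

end fam

section fam2
variable {α : Type*} [Fintype α] [DecidableEq α] {n : ℕ}

lemma sum_mul_sum_diag (B D : Fin n → Matrix α α ℂ)
    (h0 : ∀ j k, j ≠ k → B j * D k = 0) :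
    (∑ j, B j) * (∑ k, D k) = ∑ k, B k * D k := by
  rw [Finset.sum_mul]
  refine Finset.sum_congr rfl fun j _ => ?_
  rw [Finset.mul_sum]
  exact Finset.sum_eq_single j (fun k _ hkj => h0 j k (Ne.symm hkj)) (by simp)

end fam2

/-- Given orthogonal families of nonzero projections `Δ_k` on `𝒳 ⊗ 𝒴` and `Λ_k` on `𝒵`,
set `Π = Σ_k Δ_k ⊗ Λ_k`.  If `U` is a unitary on `𝒳 ⊗ 𝒴 ⊗ 𝒵` that is `𝒴 → 𝒳` causal on
`im(Π)`, and `X` is a unitary on `𝒳` such that `U*(X ⊗ 1)U` commutes with `Π`, then there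
is a unitary `W` on `𝒳 ⊗ 𝒴` with `Π U*(X ⊗ 1)U Π = Π (W ⊗ 1) Π`. -/
theorem statement4 {ιX ιY ιZ : Type*} [Fintype ιX] [Fintype ιY] [Fintype ιZ]
    [DecidableEq ιX] [DecidableEq ιY] [DecidableEq ιZ]
    (n : ℕ) (Δ : Fin n → Matrix (ιX × ιY) (ιX × ιY) ℂ) (Λ : Fin n → Matrix ιZ ιZ ℂ)
    (hΔproj : ∀ k, (Δ k).IsHermitian ∧ Δ k * Δ k = Δ k)
    (hΔne : ∀ k, Δ k ≠ 0)
    (hΔorth : ∀ j k, j ≠ k → Δ j * Δ k = 0)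
    (hΛproj : ∀ k, (Λ k).IsHermitian ∧ Λ k * Λ k = Λ k)
    (hΛne : ∀ k, Λ k ≠ 0)
    (hΛorth : ∀ j k, j ≠ k → Λ j * Λ k = 0)
    (U : Matrix ((ιX × ιY) × ιZ) ((ιX × ιY) × ιZ) ℂ)
    (hU : U ∈ Matrix.unitaryGroup ((ιX × ιY) × ιZ) ℂ)
    (hUcausal : IsCausalOn U (LinearMap.range (∑ k, Δ k ⊗ₖ Λ k).mulVecLin))
    (X : Matrix ιX ιX ℂ)
    (hX : X ∈ Matrix.unitaryGroup ιX ℂ)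
    (hcomm :
      (Uᴴ * ((X ⊗ₖ (1 : Matrix ιY ιY ℂ)) ⊗ₖ (1 : Matrix ιZ ιZ ℂ)) * U) * (∑ k, Δ k ⊗ₖ Λ k) =
      (∑ k, Δ k ⊗ₖ Λ k) * (Uᴴ * ((X ⊗ₖ (1 : Matrix ιY ιY ℂ)) ⊗ₖ (1 : Matrix ιZ ιZ ℂ)) * U)) :
    ∃ W ∈ Matrix.unitaryGroup (ιX × ιY) ℂ,
      (∑ k, Δ k ⊗ₖ Λ k) *
          (Uᴴ * ((X ⊗ₖ (1 : Matrix ιY ιY ℂ)) ⊗ₖ (1 : Matrix ιZ ιZ ℂ)) * U) *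
          (∑ k, Δ k ⊗ₖ Λ k) =
        (∑ k, Δ k ⊗ₖ Λ k) * (W ⊗ₖ (1 : Matrix ιZ ιZ ℂ)) * (∑ k, Δ k ⊗ₖ Λ k) := by
  classical
  have hΔherm : ∀ k, (Δ k)ᴴ = Δ k := fun k => (hΔproj k).1
  have hΔidem : ∀ k, Δ k * Δ k = Δ k := fun k => (hΔproj k).2
  have hΛherm : ∀ k, (Λ k)ᴴ = Λ k := fun k => (hΛproj k).1
  have hΛidem : ∀ k, Λ k * Λ k = Λ k := fun k => (hΛproj k).2
  set P : Matrix ((ιX × ιY) × ιZ) ((ιX × ιY) × ιZ) ℂ := ∑ k, Δ k ⊗ₖ Λ k with hPdef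
  set S : Matrix ((ιX × ιY) × ιZ) ((ιX × ιY) × ιZ) ℂ :=
    (X ⊗ₖ (1 : Matrix ιY ιY ℂ)) ⊗ₖ (1 : Matrix ιZ ιZ ℂ) with hSdef
  set A : Matrix ((ιX × ιY) × ιZ) ((ιX × ιY) × ιZ) ℂ := Uᴴ * S * U with hAdef
  clear_value P S A
  -- basic facts about P
  have hPherm : Pᴴ = P := by
    rw [hPdef, Matrix.conjTranspose_sum]
    exact Finset.sum_congr rfl fun k _ => by rw [kron_conjTranspose, hΔherm, hΛherm]
  have hPP : P * P = P := by
    rw [hPdef, sum_kron_mul_sum_kron _ _ _ _ hΛorth]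
    exact Finset.sum_congr rfl fun k _ => by rw [hΔidem, hΛidem]
  have key_expand : ∀ R : Matrix (ιX × ιY) (ιX × ιY) ℂ,
      P * (R ⊗ₖ (1 : Matrix ιZ ιZ ℂ)) * P = ∑ k, (Δ k * R * Δ k) ⊗ₖ Λ k := by
    intro R
    rw [hPdef, sum_kron_mul_kron]
    rw [show (∑ k, (Δ k * R) ⊗ₖ (Λ k * (1 : Matrix ιZ ιZ ℂ)))
        = ∑ k, (Δ k * R) ⊗ₖ Λ k from
      Finset.sum_congr rfl fun k _ => by rw [Matrix.mul_one]]
    rw [sum_kron_mul_sum_kron _ _ _ _ hΛorth]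
    exact Finset.sum_congr rfl fun k _ => by rw [hΛidem]
  -- linearized causality
  have htr_vanish : ∀ M : Matrix ((ιX × ιY) × ιZ) ((ιX × ιY) × ιZ) ℂ,
      P * M * P = M → ptraceZ3 M = 0 → (M * A).trace = 0 := by
    intro M hM hTr
    have h0 := causal_lin U P M hUcausal hPherm hM hTr
    rw [ptraceYZ3_eq] at h0
    rw [show M * A = (M * Uᴴ * S) * U from by rw [hAdef]; noncomm_ring,
      Matrix.trace_mul_comm,
      show U * (M * Uᴴ * S) = (U * M * Uᴴ) * S from by noncomm_ring,
      hSdef, trace_mul_kron_one, trace_mul_kron_one, h0, Matrix.zero_mul,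
      Matrix.trace_zero]
  -- the linear map R ↦ P (R ⊗ 1) P
  set f : Matrix (ιX × ιY) (ιX × ιY) ℂ →ₗ[ℂ] Matrix ((ιX × ιY) × ιZ) ((ιX × ιY) × ιZ) ℂ :=
    { toFun := fun R => P * (R ⊗ₖ (1 : Matrix ιZ ιZ ℂ)) * P
      map_add' := fun R1 R2 => by
        simp only [Matrix.add_kronecker, Matrix.mul_add, Matrix.add_mul]
      map_smul' := fun c R => by
        simp only [Matrix.smul_kronecker, Matrix.mul_smul, Matrix.smul_mul,
          RingHom.id_apply] } with hfdef
  have hfR : ∀ R, f R = P * (R ⊗ₖ (1 : Matrix ιZ ιZ ℂ)) * P := fun _ => rfl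
  have hfconj : ∀ R, (f R)ᴴ = f Rᴴ := by
    intro R
    rw [hfR, hfR, Matrix.conjTranspose_mul, Matrix.conjTranspose_mul, hPherm,
      kron_conjTranspose, Matrix.conjTranspose_one]
    exact (Matrix.mul_assoc _ _ _).symm
  -- duality: P A P is in the range of f
  have hA'mem : P * A * P ∈ LinearMap.range f := by
    apply mem_range_of_orth
    intro N hN
    have hN1 : ∀ R, (f R * N).trace = 0 := by
      intro R
      have := hN Rᴴ
      rwa [hfconj, Matrix.conjTranspose_conjTranspose] at this
    have hN2 : ∀ R, (Nᴴ * f R).trace = 0 := by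
      intro R
      have h1 := hN1 Rᴴ
      have h2 := congrArg star h1
      rw [← Matrix.trace_conjTranspose, Matrix.conjTranspose_mul, hfconj,
        Matrix.conjTranspose_conjTranspose] at h2
      simpa using h2
    set M : Matrix ((ιX × ιY) × ιZ) ((ιX × ιY) × ιZ) ℂ := P * Nᴴ * P with hMdef
    have hMtr : ∀ R : Matrix (ιX × ιY) (ιX × ιY) ℂ,
        (M * (R ⊗ₖ (1 : Matrix ιZ ιZ ℂ))).trace = 0 := by
      intro R
      rw [show M * (R ⊗ₖ (1 : Matrix ιZ ιZ ℂ))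
            = P * (Nᴴ * (P * (R ⊗ₖ (1 : Matrix ιZ ιZ ℂ)))) from by
          rw [hMdef]; noncomm_ring,
        Matrix.trace_mul_comm,
        show Nᴴ * (P * (R ⊗ₖ (1 : Matrix ιZ ιZ ℂ))) * P
            = Nᴴ * (P * (R ⊗ₖ (1 : Matrix ιZ ιZ ℂ)) * P) from by noncomm_ring,
        ← hfR]
      exact hN2 R
    have hMptr : ptraceZ3 M = 0 := by
      rw [ptraceZ3_eq]
      apply trace_mul_all_zero
      intro R
      rw [← trace_mul_kron_one]
      exact hMtr R
    have hMP : P * M * P = M := by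
      rw [hMdef,
        show P * (P * Nᴴ * P) * P = (P * P) * Nᴴ * (P * P) from by noncomm_ring, hPP]
    have h0 := htr_vanish M hMP hMptr
    rw [show Nᴴ * (P * A * P) = (Nᴴ * P * A) * P from by noncomm_ring,
      Matrix.trace_mul_comm,
      show P * (Nᴴ * P * A) = M * A from by rw [hMdef]; noncomm_ring]
    exact h0
  obtain ⟨R, hR⟩ := hA'mem
  rw [hfR] at hR
  set C : Fin n → Matrix (ιX × ιY) (ιX × ιY) ℂ := fun k => Δ k * R * Δ k with hCdef
  have hC : P * A * P = ∑ k, C k ⊗ₖ Λ k := by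
    rw [← hR, key_expand]
  -- unitarity facts
  have hXXH : X * Xᴴ = 1 := by
    rw [← Matrix.star_eq_conjTranspose]; exact Matrix.mem_unitaryGroup_iff.mp hX
  have hXHX : Xᴴ * X = 1 := by
    rw [← Matrix.star_eq_conjTranspose]; exact Matrix.mem_unitaryGroup_iff'.mp hX
  have hUUH : U * Uᴴ = 1 := by
    rw [← Matrix.star_eq_conjTranspose]; exact Matrix.mem_unitaryGroup_iff.mp hU
  have hUHU : Uᴴ * U = 1 := by
    rw [← Matrix.star_eq_conjTranspose]; exact Matrix.mem_unitaryGroup_iff'.mp hU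
  have hSH : Sᴴ = (Xᴴ ⊗ₖ (1 : Matrix ιY ιY ℂ)) ⊗ₖ (1 : Matrix ιZ ιZ ℂ) := by
    rw [hSdef, kron_conjTranspose, kron_conjTranspose, Matrix.conjTranspose_one,
      Matrix.conjTranspose_one]
  have hSSH : S * Sᴴ = 1 := by
    rw [hSH, hSdef, ← Matrix.mul_kronecker_mul, ← Matrix.mul_kronecker_mul, hXXH,
      Matrix.one_mul, Matrix.one_mul, Matrix.one_kronecker_one, Matrix.one_kronecker_one]
  have hSHS : Sᴴ * S = 1 := by
    rw [hSH, hSdef, ← Matrix.mul_kronecker_mul, ← Matrix.mul_kronecker_mul, hXHX,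
      Matrix.one_mul, Matrix.one_mul, Matrix.one_kronecker_one, Matrix.one_kronecker_one]
  have hAH : Aᴴ = Uᴴ * Sᴴ * U := by
    rw [hAdef]
    simp only [Matrix.conjTranspose_mul, Matrix.conjTranspose_conjTranspose,
      Matrix.mul_assoc]
  have hAAH : A * Aᴴ = 1 := by
    rw [hAH, hAdef,
      show Uᴴ * S * U * (Uᴴ * Sᴴ * U) = Uᴴ * (S * (U * Uᴴ) * Sᴴ) * U from by noncomm_ring,
      hUUH, Matrix.mul_one, hSSH, Matrix.mul_one, hUHU]
  have hAHA : Aᴴ * A = 1 := by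
    rw [hAH, hAdef,
      show Uᴴ * Sᴴ * U * (Uᴴ * S * U) = Uᴴ * (Sᴴ * (U * Uᴴ) * S) * U from by noncomm_ring,
      hUUH, Matrix.mul_one, hSHS, Matrix.mul_one, hUHU]
  have hAP : A * P = P * A := hcomm
  have hAHP : Aᴴ * P = P * Aᴴ := by
    have h := congrArg Matrix.conjTranspose hcomm
    simp only [Matrix.conjTranspose_mul, hPherm] at h
    exact h.symm
  have hPAPH : (P * A * P)ᴴ = P * Aᴴ * P := by
    rw [Matrix.conjTranspose_mul, Matrix.conjTranspose_mul, hPherm]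
    exact (Matrix.mul_assoc _ _ _).symm
  have hprod1 : (P * A * P) * (P * A * P)ᴴ = P := by
    rw [hPAPH,
      show P * A * P * (P * Aᴴ * P) = P * (A * (P * P)) * Aᴴ * P from by noncomm_ring, hPP,
      show P * (A * P) * Aᴴ * P = P * (A * P) * (Aᴴ * P) from by noncomm_ring, hAP, hAHP,
      show P * (P * A) * (P * Aᴴ) = (P * P) * (A * P) * Aᴴ from by noncomm_ring, hPP, hAP,
      show P * (P * A) * Aᴴ = (P * P) * (A * Aᴴ) from by noncomm_ring, hPP, hAAH,
      Matrix.mul_one]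
  have hprod2 : (P * A * P)ᴴ * (P * A * P) = P := by
    rw [hPAPH,
      show P * Aᴴ * P * (P * A * P) = P * (Aᴴ * (P * P)) * A * P from by noncomm_ring, hPP,
      show P * (Aᴴ * P) * A * P = P * (Aᴴ * P) * (A * P) from by noncomm_ring, hAHP, hAP,
      show P * (P * Aᴴ) * (P * A) = (P * P) * (Aᴴ * P) * A from by noncomm_ring, hPP, hAHP,
      show P * (P * Aᴴ) * A = (P * P) * (Aᴴ * A) from by noncomm_ring, hPP, hAHA,
      Matrix.mul_one]
  have hCHform : ∀ k, (C k)ᴴ = Δ k * Rᴴ * Δ k := by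
    intro k
    rw [hCdef]
    simp only [Matrix.conjTranspose_mul, hΔherm, Matrix.mul_assoc]
  have hPAPHkron : (P * A * P)ᴴ = ∑ k, (C k)ᴴ ⊗ₖ Λ k := by
    rw [hC, Matrix.conjTranspose_sum]
    exact Finset.sum_congr rfl fun k _ => by rw [kron_conjTranspose, hΛherm]
  -- extract blockwise unitarity
  have hCCH : ∀ j, C j * (C j)ᴴ = Δ j := by
    have h1 := hprod1
    rw [hPAPHkron, hC, sum_kron_mul_sum_kron _ _ _ _ hΛorth] at h1
    have h2 : ∑ k, (C k * (C k)ᴴ) ⊗ₖ Λ k = ∑ k, Δ k ⊗ₖ Λ k := by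
      rw [show (∑ k, (C k * (C k)ᴴ) ⊗ₖ Λ k)
          = ∑ k, (C k * (C k)ᴴ) ⊗ₖ (Λ k * Λ k) from
        Finset.sum_congr rfl fun k _ => by rw [hΛidem], h1, hPdef]
    exact fun j => kron_sum_ext hΛidem hΛne hΛorth _ _ h2 j
  have hCHC : ∀ j, (C j)ᴴ * C j = Δ j := by
    have h1 := hprod2
    rw [hPAPHkron, hC, sum_kron_mul_sum_kron _ _ _ _ hΛorth] at h1
    have h2 : ∑ k, ((C k)ᴴ * C k) ⊗ₖ Λ k = ∑ k, Δ k ⊗ₖ Λ k := by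
      rw [show (∑ k, ((C k)ᴴ * C k) ⊗ₖ Λ k)
          = ∑ k, ((C k)ᴴ * C k) ⊗ₖ (Λ k * Λ k) from
        Finset.sum_congr rfl fun k _ => by rw [hΛidem], h1, hPdef]
    exact fun j => kron_sum_ext hΛidem hΛne hΛorth _ _ h2 j
  -- sandwich helpers
  have hmid : ∀ (Y Z : Matrix (ιX × ιY) (ιX × ιY) ℂ) (j k : Fin n), j ≠ k →
      (Δ j * Y * Δ j) * (Δ k * Z * Δ k) = 0 := by
    intro Y Z j k hjk
    rw [show (Δ j * Y * Δ j) * (Δ k * Z * Δ k)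
        = Δ j * Y * (Δ j * Δ k) * (Z * Δ k) from by noncomm_ring,
      hΔorth j k hjk, Matrix.mul_zero, Matrix.zero_mul]
  have hsandR : ∀ (Y : Matrix (ιX × ιY) (ιX × ιY) ℂ) (j : Fin n),
      (Δ j * Y * Δ j) * Δ j = Δ j * Y * Δ j := by
    intro Y j
    rw [Matrix.mul_assoc, hΔidem]
  have hsandL : ∀ (Y : Matrix (ιX × ιY) (ιX × ιY) ℂ) (j : Fin n),
      Δ j * (Δ j * Y * Δ j) = Δ j * Y * Δ j := by
    intro Y j
    rw [show Δ j * (Δ j * Y * Δ j) = (Δ j * Δ j) * Y * Δ j from by noncomm_ring, hΔidem]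
  set Pd : Matrix (ιX × ιY) (ιX × ιY) ℂ := ∑ k, Δ k with hPddef
  set W : Matrix (ιX × ιY) (ιX × ιY) ℂ := (∑ k, C k) + (1 - Pd) with hWdef
  clear_value W
  have hPdPd : Pd * Pd = Pd := by
    rw [hPddef, sum_mul_sum_diag _ _ hΔorth]
    exact Finset.sum_congr rfl fun k _ => hΔidem k
  have hWH : Wᴴ = (∑ k, (C k)ᴴ) + (1 - Pd) := by
    rw [hWdef, Matrix.conjTranspose_add, Matrix.conjTranspose_sum,
      Matrix.conjTranspose_sub, Matrix.conjTranspose_one, hPddef,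
      Matrix.conjTranspose_sum]
    congr 2
    exact Finset.sum_congr rfl fun k _ => hΔherm k
  -- component products
  have hCHsum_mul_Csum : (∑ k, (C k)ᴴ) * (∑ k, C k) = Pd := by
    rw [show (∑ k, (C k)ᴴ) = ∑ k, Δ k * Rᴴ * Δ k from
        Finset.sum_congr rfl fun k _ => hCHform k, hCdef,
      sum_mul_sum_diag _ _ (fun j k hjk => hmid _ _ j k hjk), hPddef]
    refine Finset.sum_congr rfl fun k _ => ?_
    have := hCHC k
    rw [hCHform k, hCdef] at this
    exact this
  have hCsum_mul_CHsum : (∑ k, C k) * (∑ k, (C k)ᴴ) = Pd := by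
    rw [show (∑ k, (C k)ᴴ) = ∑ k, Δ k * Rᴴ * Δ k from
        Finset.sum_congr rfl fun k _ => hCHform k, hCdef,
      sum_mul_sum_diag _ _ (fun j k hjk => hmid _ _ j k hjk), hPddef]
    refine Finset.sum_congr rfl fun k _ => ?_
    have := hCCH k
    rw [hCHform k, hCdef] at this
    exact this
  have hCHsum_mul_Pd : (∑ k, (C k)ᴴ) * Pd = ∑ k, (C k)ᴴ := by
    rw [show (∑ k, (C k)ᴴ) = ∑ k, Δ k * Rᴴ * Δ k from
        Finset.sum_congr rfl fun k _ => hCHform k, hPddef,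
      sum_mul_sum_diag _ _ (fun j k hjk => by
        rw [show Δ j * Rᴴ * Δ j * Δ k = (Δ j * Rᴴ) * (Δ j * Δ k) from by noncomm_ring,
          hΔorth j k hjk, Matrix.mul_zero])]
    exact Finset.sum_congr rfl fun k _ => hsandR _ k
  have hCsum_mul_Pd : (∑ k, C k) * Pd = ∑ k, C k := by
    rw [hCdef, hPddef,
      sum_mul_sum_diag _ _ (fun j k hjk => by
        rw [show Δ j * R * Δ j * Δ k = (Δ j * R) * (Δ j * Δ k) from by noncomm_ring,
          hΔorth j k hjk, Matrix.mul_zero])]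
    exact Finset.sum_congr rfl fun k _ => hsandR _ k
  have hPd_mul_Csum : Pd * (∑ k, C k) = ∑ k, C k := by
    rw [hCdef, hPddef,
      sum_mul_sum_diag _ _ (fun j k hjk => by
        rw [show Δ j * (Δ k * R * Δ k) = (Δ j * Δ k) * (R * Δ k) from by noncomm_ring,
          hΔorth j k hjk, Matrix.zero_mul])]
    exact Finset.sum_congr rfl fun k _ => hsandL _ k
  have hPd_mul_CHsum : Pd * (∑ k, (C k)ᴴ) = ∑ k, (C k)ᴴ := by
    rw [show (∑ k, (C k)ᴴ) = ∑ k, Δ k * Rᴴ * Δ k from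
        Finset.sum_congr rfl fun k _ => hCHform k, hPddef,
      sum_mul_sum_diag _ _ (fun j k hjk => by
        rw [show Δ j * (Δ k * Rᴴ * Δ k) = (Δ j * Δ k) * (Rᴴ * Δ k) from by noncomm_ring,
          hΔorth j k hjk, Matrix.zero_mul])]
    exact Finset.sum_congr rfl fun k _ => hsandL _ k
  -- W is unitary
  have hWHW : Wᴴ * W = 1 := by
    rw [hWH, hWdef]
    simp only [Matrix.add_mul, Matrix.mul_add, Matrix.sub_mul, Matrix.mul_sub,
      Matrix.one_mul, Matrix.mul_one, hCHsum_mul_Csum, hCHsum_mul_Pd, hPd_mul_Csum, hPdPd]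
    abel
  have hWWH : W * Wᴴ = 1 := by
    rw [hWH, hWdef]
    simp only [Matrix.add_mul, Matrix.mul_add, Matrix.sub_mul, Matrix.mul_sub,
      Matrix.one_mul, Matrix.mul_one, hCsum_mul_CHsum, hCsum_mul_Pd, hPd_mul_CHsum, hPdPd]
    abel
  refine ⟨W, ?_, ?_⟩
  · rw [Matrix.mem_unitaryGroup_iff, Matrix.star_eq_conjTranspose]
    exact hWWH
  · rw [hC, key_expand]
    refine Finset.sum_congr rfl fun k _ => ?_
    congr 1
    -- C k = Δ k * W * Δ k
    have h1 : Δ k * (∑ j, C j) * Δ k = C k := by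
      rw [Finset.mul_sum, Finset.sum_mul]
      refine Eq.trans (Finset.sum_eq_single k (fun j _ hjk => ?_) (by simp)) ?_
      · rw [hCdef, show Δ k * (Δ j * R * Δ j) * Δ k
            = (Δ k * Δ j) * R * (Δ j * Δ k) from by noncomm_ring,
          hΔorth k j (Ne.symm hjk), hΔorth j k hjk, Matrix.zero_mul, Matrix.mul_zero]
      · rw [hCdef, hsandL, hsandR]
    have h2 : Δ k * Pd = Δ k := by
      rw [hPddef, Finset.mul_sum]
      refine Eq.trans (Finset.sum_eq_single k (fun j _ hjk => hΔorth k j (Ne.symm hjk))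
        (by simp)) (hΔidem k)
    have h3 : Δ k * (1 - Pd) * Δ k = 0 := by
      rw [Matrix.mul_sub, Matrix.mul_one, h2, sub_self, Matrix.zero_mul]
    rw [hWdef, Matrix.mul_add, Matrix.add_mul, h1, h3, add_zero]
end

section
/- Let 𝒲 and 𝒵 be finite-dimensional complex Hilbert spaces, let Π be an orthogonal projection operator on 𝒲⊗𝒵, and let A be a linear operator on 𝒲⊗𝒵 such that ⟨H, A⟩ = 0 for every Hermitian operator H on 𝒲⊗𝒵 with im(H) ⊆ im(Π) and Tr_𝒵(H) = 0. Then for every unitary operator Z on 𝒵 satisfying (1_𝒲⊗Z)Π = Π(1_𝒲⊗Z), one has (1_𝒲⊗Z)(ΠAΠ) = (ΠAΠ)(1_𝒲⊗Z). -/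
open Matrix
open scoped Kronecker ComplexOrder

lemma one_kron_conjT {ιW ιZ : Type*} [DecidableEq ιW]
    (Z : Matrix ιZ ιZ ℂ) :
    ((1 : Matrix ιW ιW ℂ) ⊗ₖ Z)ᴴ = (1 : Matrix ιW ιW ℂ) ⊗ₖ Zᴴ := by
  ext ⟨a,b⟩ ⟨c,d⟩
  simp [conjTranspose_apply, Matrix.one_apply, apply_ite, mul_comm, eq_comm]
  split <;> simp_all

lemma ptrace_conj {ιW ιZ : Type*} [Fintype ιW] [Fintype ιZ] [DecidableEq ιW] [DecidableEq ιZ]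
    (Z : Matrix ιZ ιZ ℂ) (hZ : Z * Zᴴ = 1) (K : Matrix (ιW × ιZ) (ιW × ιZ) ℂ) :
    ptraceZ2 (((1:Matrix ιW ιW ℂ) ⊗ₖ Z)ᴴ * K * ((1:Matrix ιW ιW ℂ) ⊗ₖ Z)) = ptraceZ2 K := by
  ext w w'
  show ∑ z, (((1:Matrix ιW ιW ℂ) ⊗ₖ Z)ᴴ * K * ((1:Matrix ιW ιW ℂ) ⊗ₖ Z)) (w, z) (w', z)
      = ∑ z, K (w, z) (w', z)
  have hstar : ∀ (c : Prop) [Decidable c] (a b : ℂ),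
      star (if c then a else b) = if c then star a else star b := by
    intros c _ a b; exact apply_ite star c a b
  have key : ∀ b d : ιZ, (∑ x, Z d x * (starRingEnd ℂ) (Z b x)) = if d = b then 1 else 0 := by
    intro b d
    have := congrFun (congrFun hZ d) b
    simpa [mul_apply, conjTranspose_apply, one_apply] using this
  simp only [mul_apply, conjTranspose_apply, kroneckerMap_apply,
    one_apply, Fintype.sum_prod_type, hstar, star_zero, ite_mul, mul_ite, one_mul, mul_one,
    zero_mul, mul_zero, Finset.sum_ite_eq, Finset.sum_ite_eq', Finset.mem_univ, if_true,
    Finset.sum_ite_irrel, Finset.sum_const_zero]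
  calc ∑ x, ∑ x1, (∑ x2, star (Z x2 x) * K (w, x2) (w', x1)) * Z x1 x
      = ∑ x1, ∑ x2, K (w,x2) (w',x1) * ∑ x, Z x1 x * star (Z x2 x) := by
        simp_rw [Finset.sum_mul, Finset.mul_sum]
        rw [Finset.sum_comm]
        refine Finset.sum_congr rfl fun x1 _ => ?_
        rw [Finset.sum_comm]
        exact Finset.sum_congr rfl fun x2 _ => Finset.sum_congr rfl fun x _ => by ring
    _ = ∑ z, K (w, z) (w', z) := by
        simp [key, mul_ite, Finset.sum_ite_eq, Finset.sum_ite_eq', Finset.mem_univ]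

/-- Let `Π` be an orthogonal projection on `𝒲 ⊗ 𝒵` and `A` an operator on `𝒲 ⊗ 𝒵` with
`⟨H, A⟩ = 0` for every Hermitian `H` with `im(H) ⊆ im(Π)` and `Tr_𝒵(H) = 0`.  Then
`Π A Π` commutes with `1_𝒲 ⊗ Z` for every unitary `Z` on `𝒵` commuting with `Π`. -/
theorem statement8 {ιW ιZ : Type*} [Fintype ιW] [Fintype ιZ] [DecidableEq ιW] [DecidableEq ιZ]
    (P : Matrix (ιW × ιZ) (ιW × ιZ) ℂ)
    (hPproj : P.IsHermitian ∧ P * P = P)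
    (A : Matrix (ιW × ιZ) (ιW × ιZ) ℂ)
    (hA : ∀ H : Matrix (ιW × ιZ) (ιW × ιZ) ℂ, H.IsHermitian →
      LinearMap.range H.mulVecLin ≤ LinearMap.range P.mulVecLin →
      ptraceZ2 H = 0 → (Hᴴ * A).trace = 0)
    (Z : Matrix ιZ ιZ ℂ) (hZ : Z ∈ Matrix.unitaryGroup ιZ ℂ)
    (hZP : ((1 : Matrix ιW ιW ℂ) ⊗ₖ Z) * P = P * ((1 : Matrix ιW ιW ℂ) ⊗ₖ Z)) :
    ((1 : Matrix ιW ιW ℂ) ⊗ₖ Z) * (P * A * P) = (P * A * P) * ((1 : Matrix ιW ιW ℂ) ⊗ₖ Z) := by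
  obtain ⟨hPH, hPP⟩ := hPproj
  have hPH' : Pᴴ = P := hPH
  obtain ⟨U, hU⟩ : ∃ U, ((1 : Matrix ιW ιW ℂ) ⊗ₖ Z) = U := ⟨_, rfl⟩
  rw [hU] at hZP ⊢
  have hZZ' : Z * Zᴴ = 1 := by
    simpa [Matrix.star_eq_conjTranspose] using hZ.2
  have hZ'Z : Zᴴ * Z = 1 := by
    simpa [Matrix.star_eq_conjTranspose] using hZ.1
  have hUH : Uᴴ = (1 : Matrix ιW ιW ℂ) ⊗ₖ Zᴴ := by rw [← hU]; exact one_kron_conjT Z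
  have hUUc : U * Uᴴ = 1 := by
    rw [hUH, ← hU, ← mul_kronecker_mul, one_mul, hZZ', one_kronecker_one]
  have hUcU : Uᴴ * U = 1 := by
    rw [hUH, ← hU, ← mul_kronecker_mul, one_mul, hZ'Z, one_kronecker_one]
  -- P commutes with Uᴴ
  have hPUc : P * Uᴴ = Uᴴ * P := by
    have := congrArg conjTranspose hZP
    simpa [conjTranspose_mul, hPH'] using this
  obtain ⟨M, hM⟩ : ∃ M, P * A * P = M := ⟨_, rfl⟩
  rw [hM]
  obtain ⟨D, hD⟩ : ∃ D, U * M * Uᴴ - M = D := ⟨_, rfl⟩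
  have hPMP : P * M * P = M := by
    calc P * M * P = (P * P) * A * (P * P) := by rw [← hM]; simp only [Matrix.mul_assoc]
      _ = M := by rw [hPP, ← hM]
  have hPDP : P * D * P = D := by
    rw [← hD, Matrix.mul_sub, Matrix.sub_mul, hPMP]
    congr 1
    calc P * (U * M * Uᴴ) * P = (P * U) * (M * (Uᴴ * P)) := by
          simp only [Matrix.mul_assoc]
      _ = (U * P) * (M * (P * Uᴴ)) := by rw [← hZP, ← hPUc]
      _ = U * (P * M * P) * Uᴴ := by simp only [Matrix.mul_assoc]
      _ = U * M * Uᴴ := by rw [hPMP, Matrix.mul_assoc]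
  -- conjugate transpose of D also sandwiched by P
  have hPDcP : P * Dᴴ * P = Dᴴ := by
    have := congrArg conjTranspose hPDP
    simpa [conjTranspose_mul, hPH', Matrix.mul_assoc] using this
  -- the central claim
  have claim : ∀ K : Matrix (ιW × ιZ) (ιW × ιZ) ℂ, K.IsHermitian → P * K * P = K →
      (K * D).trace = 0 := by
    intro K hK hKP
    obtain ⟨H, hH⟩ : ∃ H, Uᴴ * K * U - K = H := ⟨_, rfl⟩
    have hKH : Kᴴ = K := hK
    have hHherm : H.IsHermitian := by
      show Hᴴ = H
      rw [← hH]
      simp only [conjTranspose_sub, conjTranspose_mul, conjTranspose_conjTranspose, hKH,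
        Matrix.mul_assoc]
    have hPHP : P * H * P = H := by
      rw [← hH, Matrix.mul_sub, Matrix.sub_mul, hKP]
      congr 1
      calc P * (Uᴴ * K * U) * P = (P * Uᴴ) * (K * (U * P)) := by
            simp only [Matrix.mul_assoc]
        _ = (Uᴴ * P) * (K * (P * U)) := by rw [hPUc, hZP]
        _ = Uᴴ * (P * K * P) * U := by simp only [Matrix.mul_assoc]
        _ = Uᴴ * K * U := by rw [hKP, Matrix.mul_assoc]
    have hrange : LinearMap.range H.mulVecLin ≤ LinearMap.range P.mulVecLin := by
      have hfact : H = P * (H * P) := by rw [← Matrix.mul_assoc, hPHP]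
      rw [hfact, Matrix.mulVecLin_mul]
      exact LinearMap.range_comp_le_range _ _
    have hpt : ptraceZ2 H = 0 := by
      have h1 := ptrace_conj Z hZZ' K
      ext w w'
      have h1' := congrFun (congrFun h1 w) w'
      simp only [ptraceZ2, of_apply] at h1' ⊢
      rw [← hH]
      simp only [Matrix.sub_apply, Finset.sum_sub_distrib, Matrix.zero_apply]
      rw [hU] at h1'
      rw [h1', sub_self]
    have h0 := hA H hHherm hrange hpt
    have hHH : Hᴴ = H := hHherm
    rw [hHH] at h0
    -- now relate (H * A).trace to (K * D).trace
    have e1 : (H * M).trace = (H * A).trace := by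
      calc (H * M).trace = ((H * (P * A)) * P).trace := by
            rw [← hM]; simp only [Matrix.mul_assoc]
        _ = (P * (H * (P * A))).trace := trace_mul_comm _ _
        _ = ((P * H * P) * A).trace := by simp only [Matrix.mul_assoc]
        _ = (H * A).trace := by rw [hPHP]
    have e2 : (H * M).trace = (K * D).trace := by
      rw [← hH, ← hD, Matrix.sub_mul, Matrix.mul_sub, trace_sub, trace_sub]
      congr 1
      rw [show (Uᴴ * K * U) * M = Uᴴ * (K * (U * M)) by simp only [Matrix.mul_assoc],
        trace_mul_comm,
        show (K * (U * M)) * Uᴴ = K * (U * M * Uᴴ) by simp only [Matrix.mul_assoc]]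
    rw [← e2, e1, h0]
  -- decompose D into Hermitian parts
  obtain ⟨X, hX⟩ : ∃ X, D + Dᴴ = X := ⟨_, rfl⟩
  obtain ⟨Y, hY⟩ : ∃ Y, Complex.I • (Dᴴ - D) = Y := ⟨_, rfl⟩
  have hXherm : X.IsHermitian := by
    show Xᴴ = X
    rw [← hX, conjTranspose_add, conjTranspose_conjTranspose, add_comm]
  have hYherm : Y.IsHermitian := by
    show Yᴴ = Y
    rw [← hY, conjTranspose_smul, conjTranspose_sub, conjTranspose_conjTranspose]
    rw [Complex.star_def, Complex.conj_I]
    module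
  have hXP : P * X * P = X := by
    rw [← hX, Matrix.mul_add, Matrix.add_mul, hPDP, hPDcP]
  have hYP : P * Y * P = Y := by
    rw [← hY, Matrix.mul_smul, Matrix.smul_mul, Matrix.mul_sub, Matrix.sub_mul, hPDP, hPDcP]
  have hX0 := claim X hXherm hXP
  have hY0 := claim Y hYherm hYP
  have h2D : (2:ℂ) • Dᴴ = X - Complex.I • Y := by
    rw [← hX, ← hY, smul_smul, Complex.I_mul_I]
    module
  have htr : (Dᴴ * D).trace = 0 := by
    have : ((2:ℂ) • Dᴴ * D).trace = 0 := by
      rw [h2D, Matrix.sub_mul, trace_sub, Matrix.smul_mul, trace_smul, hX0, hY0]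
      simp
    rw [Matrix.smul_mul, trace_smul, smul_eq_mul] at this
    have h2 : (2:ℂ) ≠ 0 := by norm_num
    exact (mul_eq_zero.mp this).resolve_left h2
  have hD0 : D = 0 := by
    have hsum : ∑ j, (star (fun i => D i j)) ⬝ᵥ (fun i => D i j) = 0 := by
      rw [← htr]
      simp [Matrix.trace, Matrix.mul_apply, Matrix.conjTranspose_apply, dotProduct,
        Matrix.diag]
    have hnn : ∀ j ∈ Finset.univ, (0:ℂ) ≤ (star (fun i => D i j)) ⬝ᵥ (fun i => D i j) :=
      fun j _ => dotProduct_star_self_nonneg _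
    have hzero := (Finset.sum_eq_zero_iff_of_nonneg hnn).mp hsum
    ext i j
    have := dotProduct_star_self_eq_zero.mp (hzero j (Finset.mem_univ j))
    simpa using congrFun this i
  have hUMU : U * M * Uᴴ = M := by
    have h : U * M * Uᴴ - M = 0 := by rw [hD]; exact hD0
    exact sub_eq_zero.mp h
  calc U * M = U * M * (Uᴴ * U) := by rw [hUcU, Matrix.mul_one]
    _ = (U * M * Uᴴ) * U := by simp only [Matrix.mul_assoc]
    _ = M * U := by rw [hUMU]
end
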